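/- arXiv:1906.07216 — 6 statements merged into one kernel-verified Lean document; each statement's English description precedes it below -/
import Mathlib

section
/- Let p be a prime and let X be a finite group of characteristic p, i.e. C_X(O_p(X)) ≤ O_p(X). Let U be a normal p-subgroup of X and let R be a normal subgroup of X with [U,R] ≤ [U,O_p(X)] (that is, R centralizes U/[U,O_p(X)]). If [O_p(X), O^p(R)] ≤ U, then R ≤ O_p(X). -/
open scoped commutatorElement

section Aux

variable {X : Type*} [Group X]

/-- Three subgroups lemma with a normal target. -/
private lemma three_sub {A B C N : Subgroup X} (hN : N.Normal)
    (h1 : ⁅⁅B, C⁆, A⁆ ≤ N) (h2 : ⁅⁅C, A⁆, B⁆ ≤ N) : ⁅⁅A, B⁆, C⁆ ≤ N := by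
  haveI := hN
  have hker : ∀ S : Subgroup X, S ≤ N ↔ S.map (QuotientGroup.mk' N) = ⊥ := by
    intro S
    rw [eq_bot_iff, Subgroup.map_le_iff_le_comap, MonoidHom.comap_bot, QuotientGroup.ker_mk']
  rw [hker] at h1 h2 ⊢
  rw [Subgroup.map_commutator, Subgroup.map_commutator] at h1 h2 ⊢
  exact Subgroup.commutator_commutator_eq_bot_of_rotate h1 h2

/-- Key coprime step: if `t^b = 1` with `p ∤ b`, the commutator `⁅q,t⁆` has `p`-power
order, and `⁅⁅q,t⁆,t⁆ ∈ W` with `W` normal, then `⁅q,t⁆ ∈ W`. -/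
private lemma key_cop {p b : ℕ} (hp : p.Prime) (hb : ¬ p ∣ b) {W : Subgroup X}
    (hW : W.Normal) {t q : X} (htb : t ^ b = 1) (hct : ⁅⁅q, t⁆, t⁆ ∈ W)
    {m : ℕ} (hcp : ⁅q, t⁆ ^ p ^ m = 1) : ⁅q, t⁆ ∈ W := by
  haveI := hW
  set c : X := ⁅q, t⁆ with hc
  set π : X →* X ⧸ W := QuotientGroup.mk' W with hπ
  have hcomm : Commute (π c) (π t) := by
    have h1 : π ⁅c, t⁆ = 1 := (QuotientGroup.eq_one_iff _).2 hct
    rw [map_commutatorElement] at h1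
    exact commutatorElement_eq_one_iff_commute.mp h1
  have hctX : c * t = q * t * q⁻¹ := by
    rw [hc, commutatorElement_def]; group
  have conjpow : ∀ N : ℕ, (q * t * q⁻¹) ^ N = q * t ^ N * q⁻¹ := by
    intro N
    induction N with
    | zero => simp
    | succ n ih => rw [pow_succ, pow_succ, ih]; group
  have hctb : (c * t) ^ b = 1 := by
    rw [hctX, conjpow, htb]; group
  have hcb : (π c) ^ b = 1 := by
    have h2 : (π c * π t) ^ b = (π c) ^ b * (π t) ^ b := hcomm.mul_pow b
    have h3 : (π t) ^ b = 1 := by rw [← map_pow, htb, map_one]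
    have h4 : (π c * π t) ^ b = 1 := by rw [← map_mul, ← map_pow, hctb, map_one]
    rw [h2, h3, mul_one] at h4
    exact h4
  have hcpm : (π c) ^ p ^ m = 1 := by rw [← map_pow, hcp, map_one]
  have hcop : Nat.Coprime (p ^ m) b := ((Nat.Prime.coprime_iff_not_dvd hp).mpr hb).pow_left m
  have h5 : orderOf (π c) ∣ Nat.gcd (p ^ m) b :=
    Nat.dvd_gcd (orderOf_dvd_of_pow_eq_one hcpm) (orderOf_dvd_of_pow_eq_one hcb)
  rw [hcop] at h5
  have h6 : π c = 1 := orderOf_eq_one_iff.mp (Nat.eq_one_of_dvd_one h5) ▸ rfl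
  exact (QuotientGroup.eq_one_iff _).1 h6

end Aux

/-- Let `X` be a finite group of characteristic `p` (i.e. `C_X(O_p(X)) ≤ O_p(X)`,
where `P = O_p(X)` is the largest normal `p`-subgroup of `X`).  Let `U` be a normal
`p`-subgroup of `X` and `R` a normal subgroup of `X` with `[U,R] ≤ [U,O_p(X)]`.  If
`[O_p(X), O^p(R)] ≤ U` (where `T = O^p(R)` is the smallest normal subgroup of `R` with
`p`-group quotient), then `R ≤ O_p(X)`. -/
theorem stmt1 {p : ℕ} (hp : p.Prime) {X : Type*} [Group X] [Finite X]
    (P : Subgroup X) (hPnorm : P.Normal) (hPp : IsPGroup p P)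
    (hPmax : ∀ N : Subgroup X, N.Normal → IsPGroup p N → N ≤ P)
    (hchar : Subgroup.centralizer (P : Set X) ≤ P)
    (U : Subgroup X) (hUnorm : U.Normal) (hUp : IsPGroup p U)
    (R : Subgroup X) (hRnorm : R.Normal)
    (hRact : ⁅U, R⁆ ≤ ⁅U, P⁆)
    (T : Subgroup X) (hTR : T ≤ R)
    (hTnorm : ∀ r ∈ R, ∀ t ∈ T, r * t * r⁻¹ ∈ T)
    (hTq : ∀ r ∈ R, ∃ n : ℕ, r ^ p ^ n ∈ T)
    (hTmin : ∀ N : Subgroup X, N ≤ R → (∀ r ∈ R, ∀ t ∈ N, r * t * r⁻¹ ∈ N) →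
      (∀ r ∈ R, ∃ n : ℕ, r ^ p ^ n ∈ N) → T ≤ N)
    (hcomm : ⁅P, T⁆ ≤ U) :
    R ≤ P := by
  classical
  haveI : Fact p.Prime := ⟨hp⟩
  have hUP : U ≤ P := hPmax U hUnorm hUp
  -- the descending chain U, ⁅U,P⁆, ⁅⁅U,P⁆,P⁆, ...
  let V : ℕ → Subgroup X := fun n => Nat.rec U (fun _ W => ⁅W, P⁆) n
  have hVs : ∀ n, V (n + 1) = ⁅V n, P⁆ := fun n => rfl
  have hVnorm : ∀ n, (V n).Normal := by
    intro n
    induction n with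
    | zero => exact hUnorm
    | succ n ih => exact @Subgroup.commutator_normal _ _ (V n) P ih hPnorm
  have hVle : ∀ n, V n ≤ U := by
    intro n
    induction n with
    | zero => exact le_rfl
    | succ n ih =>
      exact le_trans (@Subgroup.commutator_le_left _ _ (V n) P (hVnorm n)) ih
  -- termination of the chain
  have hnil : Group.IsNilpotent ↥P := hPp.isNilpotent
  obtain ⟨k, hk⟩ := nilpotent_iff_lowerCentralSeries.mp hnil
  have hlcs : ∀ n, V n ≤ Subgroup.map P.subtype (Subgroup.lowerCentralSeries (⊤ : Subgroup ↥P) n) := by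
    intro n
    induction n with
    | zero =>
      show U ≤ Subgroup.map P.subtype ⊤
      rw [← MonoidHom.range_eq_map, Subgroup.range_subtype]
      exact hUP
    | succ n ih =>
      have hsucc : Subgroup.lowerCentralSeries (⊤ : Subgroup ↥P) (n + 1) = ⁅Subgroup.lowerCentralSeries (⊤ : Subgroup ↥P) n, ⊤⁆ := rfl
      rw [hsucc, Subgroup.map_commutator]
      refine le_trans (le_of_eq (hVs n)) (Subgroup.commutator_mono ih ?_)
      rw [← MonoidHom.range_eq_map, Subgroup.range_subtype]
  have hVk : V k = ⊥ := by
    have h := hlcs k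
    rw [hk] at h
    simpa using le_bot_iff.mp (by simpa using h)
  -- main induction
  have main : ∀ j : ℕ, ⁅P, T⁆ ≤ V j ∧ ⁅V j, T⁆ ≤ V (j + 1) := by
    intro j
    induction j with
    | zero =>
      refine ⟨hcomm, ?_⟩
      exact le_trans (Subgroup.commutator_mono le_rfl hTR) hRact
    | succ j ih =>
      haveI hWn : (V (j + 1)).Normal := hVnorm (j + 1)
      -- the "centralizer of P modulo V (j+1)" subgroup
      let C : Subgroup X :=
      { carrier := {x : X | ∀ q ∈ P, ⁅q, x⁆ ∈ V (j + 1)}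
        one_mem' := by
          intro q hq
          simpa [commutatorElement_def] using (V (j + 1)).one_mem
        mul_mem' := by
          intro x y hx hy q hq
          have hxy : ⁅q, x * y⁆ = ⁅q, x⁆ * (x * ⁅q, y⁆ * x⁻¹) := by
            simp only [commutatorElement_def]; group
          rw [hxy]
          exact mul_mem (hx q hq) (hWn.conj_mem _ (hy q hq) x)
        inv_mem' := by
          intro x hx q hq
          have hinv : ⁅q, x⁻¹⁆ = x⁻¹ * ⁅q, x⁆⁻¹ * (x⁻¹)⁻¹ := by
            simp only [commutatorElement_def]; group
          rw [hinv]
          exact hWn.conj_mem _ (inv_mem (hx q hq)) x⁻¹ }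
      have hmemC : ∀ x : X, x ∈ C ↔ ∀ q ∈ P, ⁅q, x⁆ ∈ V (j + 1) := fun x => Iff.rfl
      -- T ≤ C via minimality of T
      have hTC : T ≤ C := by
        have hconj : ∀ r ∈ R, ∀ x ∈ T ⊓ C, r * x * r⁻¹ ∈ T ⊓ C := by
          intro r hr x hx
          refine ⟨hTnorm r hr x hx.1, ?_⟩
          show ∀ q ∈ P, ⁅q, r * x * r⁻¹⁆ ∈ V (j + 1)
          intro q hq
          have hkey : ⁅q, r * x * r⁻¹⁆ = r * ⁅r⁻¹ * q * r, x⁆ * r⁻¹ := by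
            simp only [commutatorElement_def]; group
          rw [hkey]
          have hq' : r⁻¹ * q * r ∈ P := by
            simpa using hPnorm.conj_mem q hq r⁻¹
          exact hWn.conj_mem _ ((hmemC x).1 hx.2 _ hq') r
        have hpow : ∀ r ∈ R, ∃ n : ℕ, r ^ p ^ n ∈ T ⊓ C := by
          intro r hr
          obtain ⟨n, hn⟩ := hTq r hr
          set s : X := r ^ p ^ n with hs
          set d : ℕ := orderOf s with hd
          have hd0 : d ≠ 0 := (orderOf_pos s).ne'
          set a : ℕ := d.factorization p with ha
          set b : ℕ := d / p ^ a with hb2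
          have hpb : ¬ p ∣ b := Nat.not_dvd_ordCompl hp hd0
          refine ⟨n + a, ?_⟩
          have hra : r ^ p ^ (n + a) = s ^ p ^ a := by
            rw [hs, ← pow_mul, ← pow_add]
          rw [hra]
          set t : X := s ^ p ^ a with htdef
          have htT : t ∈ T := Subgroup.pow_mem T hn _
          refine ⟨htT, ?_⟩
          show ∀ q ∈ P, ⁅q, t⁆ ∈ V (j + 1)
          intro q hq
          have htb : t ^ b = 1 := by
            rw [htdef, ← pow_mul]
            have hdd : p ^ a * b = d := Nat.ordProj_mul_ordCompl_eq_self d p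
            rw [hdd, hd]
            exact pow_orderOf_eq_one s
          have hcT : ⁅q, t⁆ ∈ ⁅P, T⁆ := Subgroup.commutator_mem_commutator hq htT
          have hcVj : ⁅q, t⁆ ∈ V j := ih.1 hcT
          have hctW : ⁅⁅q, t⁆, t⁆ ∈ V (j + 1) :=
            ih.2 (Subgroup.commutator_mem_commutator hcVj htT)
          have hcU : ⁅q, t⁆ ∈ U := hVle j hcVj
          obtain ⟨m, hm⟩ := hUp ⟨_, hcU⟩
          have hcp : ⁅q, t⁆ ^ p ^ m = 1 := by
            have := congrArg (Subtype.val) hm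
            simpa using this
          exact key_cop hp hpb hWn htb hctW hcp
        exact le_trans (hTmin (T ⊓ C) (le_trans inf_le_left hTR) hconj hpow) inf_le_right
      have h1 : ⁅P, T⁆ ≤ V (j + 1) := by
        rw [Subgroup.commutator_le]
        intro g hg t ht
        exact (hmemC t).1 (hTC ht) g hg
      refine ⟨h1, ?_⟩
      have hA : ⁅⁅P, T⁆, V j⁆ ≤ V (j + 2) := by
        refine le_trans (Subgroup.commutator_mono h1 (le_trans (hVle j) hUP)) ?_
        exact le_of_eq (hVs (j + 1)).symm
      have hB : ⁅⁅T, V j⁆, P⁆ ≤ V (j + 2) := by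
        rw [Subgroup.commutator_comm T (V j)]
        refine le_trans (Subgroup.commutator_mono ih.2 le_rfl) ?_
        exact le_of_eq (hVs (j + 1)).symm
      have h3 := three_sub (hVnorm (j + 2)) hA hB
      rwa [← hVs j] at h3
  -- conclude
  have hPT : ⁅P, T⁆ = ⊥ := le_bot_iff.mp (hVk ▸ (main k).1)
  have hTcent : T ≤ Subgroup.centralizer (P : Set X) := by
    rw [← Subgroup.commutator_eq_bot_iff_le_centralizer]
    rw [Subgroup.commutator_comm]
    exact hPT
  have hTP : T ≤ P := le_trans hTcent hchar
  have hRp : IsPGroup p R := by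
    intro g
    obtain ⟨n, hn⟩ := hTq (g : X) g.2
    have hgP : ((g : X)) ^ p ^ n ∈ P := hTP hn
    obtain ⟨m, hm⟩ := hPp ⟨_, hgP⟩
    refine ⟨n + m, ?_⟩
    have hzero : ((g : X)) ^ p ^ (n + m) = 1 := by
      have h := congrArg (Subtype.val) hm
      simp only [SubmonoidClass.coe_pow, OneMemClass.coe_one] at h
      rw [pow_add, pow_mul]
      exact h
    exact Subtype.ext (by simpa using hzero)
  exact hPmax R hRnorm hRp
end

section
/- Let p be a prime, X a finite group, and V ≤ U normal p-subgroups of X. Let Q be a large p-subgroup of X (i.e. C_X(Q) ≤ Q and N_X(T) ≤ N_X(Q) for every nontrivial subgroup T of C_X(Q)) which is not normal in X. Assume that V is a nontrivial elementary abelian group on which X acts nontrivially by conjugation and which has no X-invariant subgroup other than 1 and V (i.e. V is a nontrivial irreducible GF(p)X-module), and that O^p(X) centralizes U/V, i.e. [U, O^p(X)] ≤ V. Then U is elementary abelian. -/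
/-- A `p`-subgroup `Q` of a group is *large* if `C_G(Q) ≤ Q` and `N_G(T) ≤ N_G(Q)` for
every nontrivial subgroup `T` of `C_G(Q)`. -/
def IsLargeSubgroup (p : ℕ) {G : Type*} [Group G] (Q : Subgroup G) : Prop :=
  IsPGroup p Q ∧ Subgroup.centralizer (Q : Set G) ≤ Q ∧
    ∀ T : Subgroup G, T ≠ ⊥ → T ≤ Subgroup.centralizer (Q : Set G) →
      Subgroup.normalizer (T : Set G) ≤ Subgroup.normalizer (Q : Set G)

open scoped commutatorElement

/-- If `W` is a nontrivial normal `p`-subgroup of a finite group `X` and `P` is any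
`p`-subgroup, then there is a nontrivial element of `W` centralized by `P`. -/
private lemma fp_lemma {p : ℕ} (hp : p.Prime) {X : Type*} [Group X] [Finite X]
    (W P : Subgroup X) (hW : W.Normal) (hWp : IsPGroup p W) (hWne : W ≠ ⊥)
    (hP : IsPGroup p P) :
    ∃ w ∈ W, w ≠ 1 ∧ ∀ g ∈ P, g * w = w * g := by
  haveI : Fact p.Prime := ⟨hp⟩
  haveI := hW
  letI : MulAction ↥P ↥W := MulAction.compHom _ ((MulAut.conjNormal (H := W)).comp P.subtype)
  have hsmul : ∀ (g : ↥P) (w : ↥W), g • w = MulAut.conjNormal (g : X) w := fun _ _ => rfl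
  have hone : (1 : ↥W) ∈ MulAction.fixedPoints ↥P ↥W := by
    intro g
    rw [hsmul]
    exact map_one _
  have hdvd : p ∣ Nat.card ↥W := by
    obtain ⟨n, hn⟩ := hWp.exists_card_eq
    have hne : Nat.card ↥W ≠ 1 := by
      simpa [Subgroup.card_eq_one] using hWne
    rcases n with _ | n
    · simp only [pow_zero] at hn; exact absurd hn hne
    · exact hn ▸ dvd_pow_self p (Nat.succ_ne_zero n)
  obtain ⟨b, hb, hbne⟩ :=
    hP.exists_fixed_point_of_prime_dvd_card_of_fixed_point ↥W hdvd hone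
  refine ⟨(b : X), b.2, ?_, ?_⟩
  · intro h
    exact hbne (Subtype.ext h.symm)
  · intro g hg
    have := hb ⟨g, hg⟩
    rw [hsmul] at this
    have h2 : g * (b : X) * g⁻¹ = (b : X) := by
      conv_rhs => rw [← this]
      rw [MulAut.conjNormal_apply]
    calc g * (b : X) = (g * (b : X) * g⁻¹) * g := by group
    _ = (b : X) * g := by rw [h2]

/-- If `Q` is a large non-normal `p`-subgroup of the finite group `X`, `X/T` is a
`p`-group, and `W` is a normal `p`-subgroup of `X` centralized by `T`, then `W = ⊥`. -/
private lemma key_lemma {p : ℕ} (hp : p.Prime) {X : Type*} [Group X] [Finite X]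
    (Q : Subgroup X) (hQ : IsLargeSubgroup p Q) (hQnotnorm : ¬ Q.Normal)
    (T : Subgroup X) (hTnorm : T.Normal) (hTq : ∀ x : X, ∃ n : ℕ, x ^ p ^ n ∈ T)
    (W : Subgroup X) (hW : W.Normal) (hWp : IsPGroup p W)
    (hWT : W ≤ Subgroup.centralizer (T : Set X)) : W = ⊥ := by
  by_contra hWne
  haveI : Fact p.Prime := ⟨hp⟩
  haveI := hTnorm
  obtain ⟨S, hQS⟩ := hQ.1.exists_le_sylow
  obtain ⟨w, hwW, hw1, hwS⟩ := fp_lemma hp W (S : Subgroup X) hW hWp hWne S.isPGroup'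
  set Z := Subgroup.zpowers w with hZ
  have hZbot : Z ≠ ⊥ := Subgroup.zpowers_ne_bot.mpr hw1
  have hZC : Z ≤ Subgroup.centralizer (Q : Set X) := by
    rw [hZ, Subgroup.zpowers_le, Subgroup.mem_centralizer_iff]
    intro h hh
    exact hwS h (hQS hh)
  have hnorm := hQ.2.2 Z hZbot hZC
  -- anything commuting with w normalizes Z
  have keyn : ∀ t : X, t * w = w * t → t ∈ Subgroup.normalizer (Z : Set X) := by
    intro t htw
    have hc : Commute t w := htw
    have hfix : ∀ h ∈ Z, t * h * t⁻¹ = h := by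
      rintro h ⟨k, rfl⟩
      have := (hc.zpow_right k).eq
      rw [this]
      group
    rw [Subgroup.mem_normalizer_iff]
    intro h
    constructor
    · intro hh
      rw [hfix h hh]; exact hh
    · intro hh
      have h4 := hfix _ hh
      have h5 : t * h * t⁻¹ = h := by
        calc t * h * t⁻¹ = t⁻¹ * (t * (t * h * t⁻¹) * t⁻¹) * t := by group
        _ = t⁻¹ * (t * h * t⁻¹) * t := by rw [h4]
        _ = h := by group
      exact h5 ▸ hh
  have hTZ : T ≤ Subgroup.normalizer (Z : Set X) := by
    intro t ht
    exact keyn t ((Subgroup.mem_centralizer_iff.mp (hWT hwW)) t ht)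
  have hSZ : (S : Subgroup X) ≤ Subgroup.normalizer (Z : Set X) := fun s hs => keyn s (hwS s hs)
  -- T ⊔ S = ⊤
  have hquot : IsPGroup p (X ⧸ T) := by
    intro x
    obtain ⟨g, rfl⟩ := QuotientGroup.mk_surjective x
    obtain ⟨n, hn⟩ := hTq g
    refine ⟨n, ?_⟩
    have : ((g ^ p ^ n : X) : X ⧸ T) = 1 := (QuotientGroup.eq_one_iff _).mpr hn
    simpa using this
  obtain ⟨k, hk⟩ := hquot.exists_card_eq
  have hTi : T.index = p ^ k := by rw [Subgroup.index_eq_card, hk]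
  have hdvd : (T ⊔ (S : Subgroup X)).index ∣ p ^ k :=
    hTi ▸ Subgroup.index_dvd_of_le le_sup_left
  have hnd : ¬ p ∣ (T ⊔ (S : Subgroup X)).index := by
    intro hpd
    exact S.not_dvd_index (hpd.trans (Subgroup.index_dvd_of_le le_sup_right))
  have hsup : T ⊔ (S : Subgroup X) = ⊤ := by
    rw [← Subgroup.index_eq_one]
    obtain ⟨j, hj, hj2⟩ := (Nat.dvd_prime_pow hp).mp hdvd
    rcases Nat.eq_zero_or_pos j with rfl | hjpos
    · simpa using hj2
    · exact absurd (hj2 ▸ dvd_pow_self p hjpos.ne') hnd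
  have htop : Subgroup.normalizer (Q : Set X) = ⊤ := by
    rw [eq_top_iff, ← hsup]
    exact sup_le (hTZ.trans hnorm) (hSZ.trans hnorm)
  exact hQnotnorm (Subgroup.normalizer_eq_top_iff.mp htop)

/-- Let `p` be a prime, `X` a finite group, `V ≤ U` normal `p`-subgroups of `X`,
and `Q` a large `p`-subgroup of `X` which is not normal.  If `V` is a nontrivial irreducible
`GF(p)X`-module (elementary abelian, acted on nontrivially by conjugation, with no proper
nontrivial `X`-invariant subgroup) and `[U, O^p(X)] ≤ V` (with `T = O^p(X)`), then `U` is
elementary abelian. -/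
theorem stmt3 {p : ℕ} (hp : p.Prime) {X : Type*} [Group X] [Finite X]
    (Q : Subgroup X) (hQ : IsLargeSubgroup p Q) (hQnotnorm : ¬ Q.Normal)
    (V U : Subgroup X) (hVU : V ≤ U)
    (hVnorm : V.Normal) (hUnorm : U.Normal)
    (hVp : IsPGroup p V) (hUp : IsPGroup p U)
    (hVnt : V ≠ ⊥)
    (hVexp : ∀ v ∈ V, v ^ p = 1) (hVab : ∀ v ∈ V, ∀ w ∈ V, v * w = w * v)
    (hVactnt : ¬ V ≤ Subgroup.center X)
    (hVirr : ∀ T : Subgroup X, T ≤ V → T.Normal → T = ⊥ ∨ T = V)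
    (T : Subgroup X) (hTnorm : T.Normal)
    (hTq : ∀ x : X, ∃ n : ℕ, x ^ p ^ n ∈ T)
    (hTmin : ∀ N : Subgroup X, N.Normal → (∀ x : X, ∃ n : ℕ, x ^ p ^ n ∈ N) → T ≤ N)
    (hUT : ⁅U, T⁆ ≤ V) :
    (∀ u ∈ U, u ^ p = 1) ∧ (∀ u ∈ U, ∀ w ∈ U, u * w = w * u) := by
  haveI : Fact p.Prime := ⟨hp⟩
  haveI := hVnorm; haveI := hUnorm; haveI := hTnorm
  -- Step 1: V ≤ centralizer U
  have hVcU : V ≤ Subgroup.centralizer (U : Set X) := by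
    obtain ⟨v, hvV, hv1, hvU⟩ := fp_lemma hp V U hVnorm hVp hVnt hUp
    set D := V ⊓ Subgroup.centralizer (U : Set X) with hD
    have hDnorm : D.Normal := by
      constructor
      intro n hn g
      rw [Subgroup.mem_inf] at hn ⊢
      obtain ⟨hnV, hnC⟩ := hn
      refine ⟨hVnorm.conj_mem n hnV g, ?_⟩
      rw [Subgroup.mem_centralizer_iff] at hnC ⊢
      intro h hh
      have hh' : g⁻¹ * h * g ∈ U := by
        have := hUnorm.conj_mem h hh g⁻¹
        simpa using this
      have h2 := hnC _ hh'
      have h3 : h * (g * n * g⁻¹) = g * ((g⁻¹ * h * g) * n) * g⁻¹ := by group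
      rw [h3, h2]
      group
    rcases hVirr D inf_le_left hDnorm with h | h
    · have hvD : v ∈ D :=
        ⟨hvV, Subgroup.mem_centralizer_iff.mpr fun h hh => hvU h hh⟩
      rw [h] at hvD
      exact absurd (Subgroup.mem_bot.mp hvD) hv1
    · rw [← h]; exact inf_le_right
  -- Step 2: U is abelian
  have hVUbot : ⁅V, U⁆ = ⊥ := Subgroup.commutator_eq_bot_iff_le_centralizer.mpr hVcU
  have h1 : ⁅⁅U, T⁆, U⁆ = ⊥ :=
    le_bot_iff.mp ((Subgroup.commutator_mono hUT le_rfl).trans hVUbot.le)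
  have h2 : ⁅⁅T, U⁆, U⁆ = ⊥ := by rw [Subgroup.commutator_comm T U]; exact h1
  have hUU : ⁅⁅U, U⁆, T⁆ = ⊥ := Subgroup.commutator_commutator_eq_bot_of_rotate h1 h2
  have hUab : ⁅U, U⁆ = ⊥ := by
    refine key_lemma hp Q hQ hQnotnorm T hTnorm hTq ⁅U, U⁆ inferInstance
      (hUp.to_le (Subgroup.commutator_le_left U U)) ?_
    exact Subgroup.commutator_eq_bot_iff_le_centralizer.mp hUU
  have hUcomm : ∀ u ∈ U, ∀ w ∈ U, u * w = w * u := by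
    intro u hu w hw
    have := Subgroup.commutator_eq_bot_iff_le_centralizer.mp hUab
    exact ((Subgroup.mem_centralizer_iff.mp (this hw)) u hu)
  refine ⟨?_, hUcomm⟩
  -- Step 3: exponent p
  set s : Set X := (fun u => u ^ p) '' (U : Set X) with hs
  set Wp := Subgroup.closure s with hWpdef
  have hsU : s ⊆ (U : Set X) := by
    rintro x ⟨u, hu, rfl⟩
    exact U.pow_mem hu p
  have hWpU : Wp ≤ U := (Subgroup.closure_le U).mpr hsU
  have hWpnorm : Wp.Normal := by
    constructor
    intro n hn g
    induction hn using Subgroup.closure_induction with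
    | mem x hx =>
      obtain ⟨u, hu, rfl⟩ := hx
      have : g * u ^ p * g⁻¹ = (g * u * g⁻¹) ^ p := conj_pow.symm
      rw [this]
      exact Subgroup.subset_closure ⟨g * u * g⁻¹, hUnorm.conj_mem u hu g, rfl⟩
    | one => simpa using Wp.one_mem
    | mul x y hx hy ihx ihy =>
      have : g * (x * y) * g⁻¹ = (g * x * g⁻¹) * (g * y * g⁻¹) := by group
      rw [this]
      exact Wp.mul_mem ihx ihy
    | inv x hx ihx =>
      have : g * x⁻¹ * g⁻¹ = (g * x * g⁻¹)⁻¹ := by group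
      rw [this]
      exact Wp.inv_mem ihx
  have hTU : ⁅T, U⁆ ≤ V := by rw [Subgroup.commutator_comm]; exact hUT
  have hWpT : Wp ≤ Subgroup.centralizer (T : Set X) := by
    rw [hWpdef, Subgroup.closure_le]
    rintro x ⟨u, hu, rfl⟩
    rw [SetLike.mem_coe, Subgroup.mem_centralizer_iff]
    intro t ht
    have hvV : ⁅t, u⁆ ∈ V := hTU (Subgroup.commutator_mem_commutator ht hu)
    have hcom : Commute ⁅t, u⁆ u := hUcomm _ (hVU hvV) u hu
    have hconj : t * u * t⁻¹ = ⁅t, u⁆ * u := by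
      rw [commutatorElement_def]; group
    have key : t * u ^ p * t⁻¹ = u ^ p := by
      rw [← conj_pow, hconj, hcom.mul_pow, hVexp _ hvV, one_mul]
    calc t * u ^ p = (t * u ^ p * t⁻¹) * t := by group
    _ = u ^ p * t := by rw [key]
  have hWpbot : Wp = ⊥ :=
    key_lemma hp Q hQ hQnotnorm T hTnorm hTq Wp hWpnorm (hUp.to_le hWpU) hWpT
  intro u hu
  have : u ^ p ∈ Wp := Subgroup.subset_closure ⟨u, hu, rfl⟩
  rw [hWpbot] at this
  exact Subgroup.mem_bot.mp this
end

section
/- Let p be a prime, X a finite group, and V ≤ U normal p-subgroups of X. Let Q be a large p-subgroup of X (i.e. C_X(Q) ≤ Q and N_X(T) ≤ N_X(Q) for every nontrivial subgroup T of C_X(Q)) which is not normal in X. Assume that V is a nontrivial elementary abelian group on which X acts nontrivially by conjugation and which has no X-invariant subgroup other than 1 and V, and that [U, O^p(X)] ≤ V. If U is not contained in Ω₁(Z(O_p(X))), then there exists x ∈ U with x ∉ Ω₁(Z(O_p(X))) and [x,X] ≤ U ∩ Ω₁(Z(O_p(X))), such that, writing Y = O_p(X), the map g ↦ [g,x] is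 an X-equivariant group homomorphism from Y onto the subgroup [Y,x] = {[g,x] : g ∈ Y} with kernel C_Y(x), and V ≤ [Y,x]. -/
/-- Membership in `Ω₁(Z(P))` for a subgroup `P`: the elements of `Z(P)` of order dividing
`p`. -/
def memOmega1ZP {G : Type*} [Group G] (p : ℕ) (P : Subgroup G) (x : G) : Prop :=
  x ∈ P ∧ x ^ p = 1 ∧ ∀ g ∈ P, x * g = g * x



/-- Fixed point lemma: if `X` acts on a finite nontrivial `p`-group `M` and the action
factors through the `p`-group `X ⧸ K`, there is a nontrivial fixed point. -/
lemma fpcore {p : ℕ} (hp : p.Prime) {X : Type*} [Group X] (K : Subgroup X) [K.Normal]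
    (hK : ∀ x : X, ∃ n : ℕ, x ^ p ^ n ∈ K)
    {M : Type*} [Group M] [Finite M] (hM : IsPGroup p M) (hnt : Nontrivial M)
    (f : X → M → M)
    (hf1 : ∀ m, f 1 m = m)
    (hfmul : ∀ g h m, f (g * h) m = f g (f h m))
    (hfone : ∀ g, f g 1 = 1)
    (hfK : ∀ k ∈ K, ∀ m, f k m = m) :
    ∃ m : M, m ≠ 1 ∧ ∀ g : X, f g m = m := by
  haveI := Fact.mk hp
  classical
  have hinv : ∀ g m, f g (f g⁻¹ m) = m := fun g m => by
    rw [← hfmul, mul_inv_cancel, hf1]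
  have hinv' : ∀ g m, f g⁻¹ (f g m) = m := fun g m => by
    rw [← hfmul, inv_mul_cancel, hf1]
  let φ : X →* Equiv.Perm M :=
    { toFun := fun g => ⟨f g, f g⁻¹, fun m => hinv' g m, fun m => hinv g m⟩
      map_one' := Equiv.ext fun m => hf1 m
      map_mul' := fun g h => Equiv.ext fun m => hfmul g h m }
  have hker : K ≤ φ.ker := fun k hk => by
    simp only [MonoidHom.mem_ker]
    exact Equiv.ext fun m => by
      exact hfK k hk m
  let ψ : X ⧸ K →* Equiv.Perm M := QuotientGroup.lift K φ hker
  haveI hpg : IsPGroup p (X ⧸ K) := by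
    intro q
    induction q using QuotientGroup.induction_on with
    | _ x =>
      obtain ⟨n, hn⟩ := hK x
      exact ⟨n, by rw [← QuotientGroup.mk_pow, QuotientGroup.eq_one_iff]; exact hn⟩
  letI : SMul (X ⧸ K) M := ⟨fun q m => ψ q m⟩
  letI : MulAction (X ⧸ K) M :=
    { one_smul := fun m => by show ψ 1 m = m; rw [map_one]; rfl
      mul_smul := fun a b m => by show ψ (a * b) m = ψ a (ψ b m); rw [map_mul]; rfl }
  have hmod := hpg.card_modEq_card_fixedPoints M
  have hone_mem : (1 : M) ∈ MulAction.fixedPoints (X ⧸ K) M := by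
    intro q
    induction q using QuotientGroup.induction_on with
    | _ x => show ψ _ 1 = 1; exact hfone x
  obtain ⟨n, hn⟩ := IsPGroup.iff_card.mp hM
  have hn0 : n ≠ 0 := by
    rintro rfl
    rw [pow_zero] at hn
    exact (Finite.one_lt_card (α := M)).ne' hn
  have hdvd : p ∣ Nat.card M := hn ▸ dvd_pow_self p hn0
  have hdvdF : p ∣ Nat.card (MulAction.fixedPoints (X ⧸ K) M) :=
    (Nat.modEq_zero_iff_dvd).mp ((hmod.symm.trans (Nat.modEq_zero_iff_dvd.mpr hdvd)))
  have hpos : 0 < Nat.card (MulAction.fixedPoints (X ⧸ K) M) := by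
    haveI : Nonempty (MulAction.fixedPoints (X ⧸ K) M) := ⟨⟨1, hone_mem⟩⟩
    exact Nat.card_pos
  have h2 : 1 < Nat.card (MulAction.fixedPoints (X ⧸ K) M) :=
    lt_of_lt_of_le hp.one_lt (Nat.le_of_dvd hpos hdvdF)
  haveI : Nontrivial (MulAction.fixedPoints (X ⧸ K) M) :=
    Finite.one_lt_card_iff_nontrivial.mp h2
  obtain ⟨⟨m, hmF⟩, hne⟩ := exists_ne (⟨1, hone_mem⟩ : MulAction.fixedPoints (X ⧸ K) M)
  refine ⟨m, ?_, ?_⟩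
  · intro h
    exact hne (Subtype.ext h)
  · intro g
    have := hmF (QuotientGroup.mk g)
    exact this


/-- Key fixed-point lemma: with `B ≤ A` normal subgroups, `A` a `p`-group,
`X ⧸ K` a `p`-group, and `[K, A] ≤ B`, there is an element of `A \ B` fixed by
conjugation modulo `B`. -/
lemma quotfp {p : ℕ} (hp : p.Prime) {X : Type*} [Group X] [Finite X]
    (A B K : Subgroup X) (hBA : B ≤ A) (hAn : A.Normal) (hBn : B.Normal) [K.Normal]
    (hA : IsPGroup p A)
    (hne : ∃ a ∈ A, a ∉ B)
    (hK : ∀ x : X, ∃ n : ℕ, x ^ p ^ n ∈ K)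
    (hKA : ∀ k ∈ K, ∀ a ∈ A, k * a * k⁻¹ * a⁻¹ ∈ B) :
    ∃ x ∈ A, x ∉ B ∧ ∀ g : X, g * x * g⁻¹ * x⁻¹ ∈ B := by
  classical
  set N : Subgroup ↥A := B.subgroupOf A with hN
  haveI hNn : N.Normal := by
    constructor
    intro n hn g
    rw [Subgroup.mem_subgroupOf] at hn ⊢
    simpa using hBn.conj_mem _ hn (g : X)
  -- conjugation homomorphisms on A
  have conjmem : ∀ (g : X) (a : ↥A), g * (a : X) * g⁻¹ ∈ A := fun g a =>
    hAn.conj_mem _ a.2 g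
  let c : X → (↥A →* ↥A) := fun g =>
    { toFun := fun a => ⟨g * (a : X) * g⁻¹, conjmem g a⟩
      map_one' := by ext; simp
      map_mul' := fun a b => by ext; push_cast; group }
  have hcomap : ∀ g : X, N ≤ N.comap (c g) := by
    intro g a ha
    rw [Subgroup.mem_subgroupOf] at ha
    rw [Subgroup.mem_comap, Subgroup.mem_subgroupOf]
    exact hBn.conj_mem _ ha g
  let f : X → (↥A ⧸ N) → (↥A ⧸ N) := fun g => QuotientGroup.map N N (c g) (hcomap g)
  have hf1 : ∀ m, f 1 m = m := by
    intro m
    induction m using QuotientGroup.induction_on with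
    | _ a =>
      show QuotientGroup.mk (c 1 a) = QuotientGroup.mk a
      congr 1
      ext
      simp [c]
  have hfmul : ∀ g h m, f (g * h) m = f g (f h m) := by
    intro g h m
    induction m using QuotientGroup.induction_on with
    | _ a =>
      show QuotientGroup.mk (c (g * h) a) = QuotientGroup.mk (c g (c h a))
      congr 1
      ext
      show (g * h) * (a : X) * (g * h)⁻¹ = g * (h * (a : X) * h⁻¹) * g⁻¹
      group
  have hfone : ∀ g, f g 1 = 1 := fun g => map_one (QuotientGroup.map N N (c g) (hcomap g))
  have hfK : ∀ k ∈ K, ∀ m, f k m = m := by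
    intro k hk m
    induction m using QuotientGroup.induction_on with
    | _ a =>
      show QuotientGroup.mk (c k a) = QuotientGroup.mk a
      rw [QuotientGroup.eq]
      rw [Subgroup.mem_subgroupOf]
      have := hKA k hk (a : X)⁻¹ (inv_mem a.2)
      rw [inv_inv] at this
      push_cast
      show (k * (a:X) * k⁻¹)⁻¹ * (a:X) ∈ B
      have heq : (k * (a:X) * k⁻¹)⁻¹ * (a:X) = k * (a:X)⁻¹ * k⁻¹ * (a:X) := by group
      rw [heq]
      exact this
  haveI : Finite (↥A ⧸ N) := Quotient.finite _
  have hM : IsPGroup p (↥A ⧸ N) := (hA.to_quotient N)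
  obtain ⟨a0, ha0A, ha0B⟩ := hne
  have hnt : Nontrivial (↥A ⧸ N) := by
    refine nontrivial_of_ne (QuotientGroup.mk ⟨a0, ha0A⟩) 1 ?_
    rw [Ne, QuotientGroup.eq_one_iff, Subgroup.mem_subgroupOf]
    exact ha0B
  obtain ⟨m, hm1, hmfix⟩ := fpcore hp K hK hM hnt f hf1 hfmul hfone hfK
  obtain ⟨a, rfl⟩ := QuotientGroup.mk_surjective m
  refine ⟨(a : X), a.2, ?_, ?_⟩
  · intro hB
    exact hm1 (by rw [QuotientGroup.eq_one_iff, Subgroup.mem_subgroupOf]; exact hB)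
  · intro g
    have := hmfix g
    rw [show f g (QuotientGroup.mk a) = QuotientGroup.mk (c g a) from rfl,
      QuotientGroup.eq, Subgroup.mem_subgroupOf] at this
    have h1 : (g * (a:X) * g⁻¹)⁻¹ * (a:X) ∈ B := by
      have h' : (((c g a)⁻¹ * a : ↥A) : X) = (g * (a:X) * g⁻¹)⁻¹ * (a:X) := by push_cast; rfl
      rw [← h']
      exact this
    have h2 := B.inv_mem h1
    have h3 := hBn.conj_mem _ h2 (a : X)
    have heq : (a:X) * ((g * (a:X) * g⁻¹)⁻¹ * (a:X))⁻¹ * (a:X)⁻¹ = g * (a:X) * g⁻¹ * (a:X)⁻¹ := by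
      group
    rw [heq] at h3
    exact h3

lemma centerfp {p : ℕ} (hp : p.Prime) {X : Type*} [Group X] [Finite X]
    (A K : Subgroup X) (hAn : A.Normal) [K.Normal] (hA : IsPGroup p A) (hAne : A ≠ ⊥)
    (hK : ∀ x : X, ∃ n : ℕ, x ^ p ^ n ∈ K)
    (hKA : ∀ k ∈ K, ∀ a ∈ A, k * a = a * k) :
    ∃ a ∈ A, a ≠ 1 ∧ ∀ g : X, g * a = a * g := by
  have hne : ∃ a ∈ A, a ∉ (⊥ : Subgroup X) := by
    obtain ⟨⟨a, haA⟩, ha1⟩ := Subgroup.ne_bot_iff_exists_ne_one.mp hAne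
    refine ⟨a, haA, ?_⟩
    rw [Subgroup.mem_bot]
    exact fun h => ha1 (Subtype.ext h)
  obtain ⟨x, hxA, hxB, hfix⟩ := quotfp hp A ⊥ K bot_le hAn inferInstance hA hne hK
    (fun k hk a ha => by rw [Subgroup.mem_bot, hKA k hk a ha]; group)
  refine ⟨x, hxA, by simpa [Subgroup.mem_bot] using hxB, fun g => ?_⟩
  have h0 := hfix g
  rw [Subgroup.mem_bot] at h0
  have key : (g * x * g⁻¹ * x⁻¹) * (x * g) = g * x := by group
  rw [h0, one_mul] at key
  exact key.symm

/-- The subgroup `Ω₁(Z(P))` (for `P` central-closed under the predicate `memOmega1ZP`). -/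
def omega1ZP {G : Type*} [Group G] (p : ℕ) (P : Subgroup G) : Subgroup G where
  carrier := {y | memOmega1ZP p P y}
  one_mem' := ⟨P.one_mem, one_pow p, fun g _ => by rw [one_mul, mul_one]⟩
  mul_mem' := by
    rintro a b ⟨haP, hap, hac⟩ ⟨hbP, hbp, hbc⟩
    refine ⟨mul_mem haP hbP, ?_, fun g hg => ?_⟩
    · have hc : Commute a b := hac b hbP
      rw [hc.mul_pow, hap, hbp, one_mul]
    · rw [mul_assoc, hbc g hg, ← mul_assoc, hac g hg, mul_assoc]
  inv_mem' := by
    rintro a ⟨haP, hap, hac⟩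
    refine ⟨inv_mem haP, by rw [inv_pow, hap, inv_one], fun g hg => ?_⟩
    have hc : Commute a g := hac g hg
    exact hc.inv_left.eq

lemma mem_omega1ZP {G : Type*} [Group G] {p : ℕ} {P : Subgroup G} {y : G} :
    y ∈ omega1ZP p P ↔ memOmega1ZP p P y := Iff.rfl

lemma omega1ZP_normal {G : Type*} [Group G] {p : ℕ} {P : Subgroup G} (hP : P.Normal) :
    (omega1ZP p P).Normal := by
  constructor
  rintro y ⟨hyP, hyp, hyc⟩ g
  refine ⟨hP.conj_mem y hyP g, ?_, fun h hh => ?_⟩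
  · have : (g * y * g⁻¹) ^ p = g * y ^ p * g⁻¹ := by
      rw [show g * y * g⁻¹ = (MulAut.conj g) y from rfl, ← map_pow]
      rfl
    rw [this, hyp, mul_one, mul_inv_cancel]
  · have hh' : g⁻¹ * h * g ∈ P := by
      have := hP.conj_mem h hh g⁻¹
      simpa using this
    have key := congrArg (fun z => g * z * g⁻¹) (hyc _ hh')
    simpa [mul_assoc] using key


open scoped commutatorElement

/-- with `V ≤ U` normal `p`-subgroups of the finite group `X`, `Q` large and
not normal, `V` a nontrivial irreducible `GF(p)X`-module, `[U, O^p(X)] ≤ V`, and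
`U ≰ Ω₁(Z(O_p(X)))`: there is `x ∈ U` with `x ∉ Ω₁(Z(O_p(X)))` and
`[x,X] ≤ U ∩ Ω₁(Z(O_p(X)))`, such that (writing `Y = O_p(X)` and `[g,x] = g⁻¹x⁻¹gx`) the map
`g ↦ [g,x]` is an `X`-equivariant homomorphism from `Y` onto the subgroup
`[Y,x] = {[g,x] : g ∈ Y}` with kernel `C_Y(x)`, and `V ≤ [Y,x]`. -/
theorem stmt4 {p : ℕ} (hp : p.Prime) {X : Type*} [Group X] [Finite X]
    (Q : Subgroup X) (hQ : IsLargeSubgroup p Q) (hQnotnorm : ¬ Q.Normal)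
    (V U : Subgroup X) (hVU : V ≤ U)
    (hVnorm : V.Normal) (hUnorm : U.Normal)
    (hVp : IsPGroup p V) (hUp : IsPGroup p U)
    (hVnt : V ≠ ⊥)
    (hVexp : ∀ v ∈ V, v ^ p = 1) (hVab : ∀ v ∈ V, ∀ w ∈ V, v * w = w * v)
    (hVactnt : ¬ V ≤ Subgroup.center X)
    (hVirr : ∀ T : Subgroup X, T ≤ V → T.Normal → T = ⊥ ∨ T = V)
    (T : Subgroup X) (hTnorm : T.Normal)
    (hTq : ∀ x : X, ∃ n : ℕ, x ^ p ^ n ∈ T)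
    (hTmin : ∀ N : Subgroup X, N.Normal → (∀ x : X, ∃ n : ℕ, x ^ p ^ n ∈ N) → T ≤ N)
    (hUT : ⁅U, T⁆ ≤ V)
    (P : Subgroup X) (hPnorm : P.Normal) (hPp : IsPGroup p P)
    (hPmax : ∀ N : Subgroup X, N.Normal → IsPGroup p N → N ≤ P)
    (hUnotOmega : ¬ ∀ u ∈ U, memOmega1ZP p P u) :
    ∃ x ∈ U, ¬ memOmega1ZP p P x ∧
      -- [x,X] ≤ U ∩ Ω₁(Z(O_p(X)))
      (∀ g : X, x⁻¹ * g⁻¹ * x * g ∈ U ∧ memOmega1ZP p P (x⁻¹ * g⁻¹ * x * g)) ∧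
      -- g ↦ [g,x] maps Y = O_p(X) into [Y,x] which is a subgroup (its image)
      (∃ I : Subgroup X, (I : Set X) = {w : X | ∃ g ∈ P, w = g⁻¹ * x⁻¹ * g * x}) ∧
      -- homomorphism property on Y
      (∀ g ∈ P, ∀ h ∈ P,
        (g * h)⁻¹ * x⁻¹ * (g * h) * x = (g⁻¹ * x⁻¹ * g * x) * (h⁻¹ * x⁻¹ * h * x)) ∧
      -- kernel is C_Y(x)
      (∀ g ∈ P, (g⁻¹ * x⁻¹ * g * x = 1 ↔ g * x = x * g)) ∧
      -- X-equivariance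
      (∀ l : X, ∀ g ∈ P,
        (l⁻¹ * g * l)⁻¹ * x⁻¹ * (l⁻¹ * g * l) * x = l⁻¹ * (g⁻¹ * x⁻¹ * g * x) * l) ∧
      -- V ≤ [Y,x]
      (∀ v ∈ V, ∃ g ∈ P, v = g⁻¹ * x⁻¹ * g * x) := by
  classical
  haveI := Fact.mk hp
  haveI := hTnorm
  obtain ⟨hQp, hQcent, hQnt⟩ := hQ
  -- Step 0: the center of X is trivial (since Q is large and not normal)
  have hZbot : Subgroup.center X = ⊥ := by
    by_contra h
    have hle : Subgroup.center X ≤ Subgroup.centralizer (Q : Set X) := by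
      intro z hz
      rw [Subgroup.mem_centralizer_iff]
      intro g _
      exact (Subgroup.mem_center_iff.mp hz g)
    have hN := hQnt (Subgroup.center X) h hle
    have htop : Subgroup.normalizer (Subgroup.center X : Set X) = ⊤ :=
      Subgroup.normalizer_eq_top_iff.mpr inferInstance
    have : Subgroup.normalizer (Q : Set X) = ⊤ := top_le_iff.mp (htop ▸ hN)
    exact hQnotnorm (Subgroup.normalizer_eq_top_iff.mp this)
  set W : Subgroup X := omega1ZP p P with hW
  have hWnorm : W.Normal := omega1ZP_normal hPnorm
  have hUP : U ≤ P := hPmax U hUnorm hUp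
  have hVP : V ≤ P := hPmax V hVnorm hVp
  -- Step 1: V ≤ W
  have hVcent : V ≤ Subgroup.centralizer (P : Set X) := by
    haveI hVsub : (V.subgroupOf P).Normal := by
      haveI := hVnorm; infer_instance
    have hsubne : V.subgroupOf P ≠ ⊥ := by
      obtain ⟨⟨v, hv⟩, hv1⟩ := Subgroup.ne_bot_iff_exists_ne_one.mp hVnt
      rw [Subgroup.ne_bot_iff_exists_ne_one]
      refine ⟨⟨⟨v, hVP hv⟩, by rwa [Subgroup.mem_subgroupOf]⟩, ?_⟩
      intro h
      apply hv1
      ext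
      exact congrArg (fun z => ((z : ↥P) : X)) (Subtype.ext_iff.mp h)
    obtain ⟨a, haV, ha1, hafix⟩ := centerfp hp (X := ↥P) (V.subgroupOf P) ⊥ hVsub
      (hPp.to_subgroup (V.subgroupOf P)) hsubne
      (fun x => by obtain ⟨n, hn⟩ := hPp x; exact ⟨n, by rw [Subgroup.mem_bot]; exact hn⟩)
      (by rintro k hk a _; rw [Subgroup.mem_bot] at hk; subst hk; rw [one_mul, mul_one])
    set v0 : X := (a : X) with hv0
    have hv0V : v0 ∈ V := by rw [← Subgroup.mem_subgroupOf]; exact haV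
    have hv01 : v0 ≠ 1 := by
      intro h
      exact ha1 (Subtype.ext h)
    have hv0c : v0 ∈ Subgroup.centralizer (P : Set X) := by
      rw [Subgroup.mem_centralizer_iff]
      intro g hg
      have := hafix ⟨g, hg⟩
      exact Subtype.ext_iff.mp this
    have hcentnorm : (Subgroup.centralizer (P : Set X)).Normal := by
      constructor
      intro c hc g
      rw [Subgroup.mem_centralizer_iff] at hc ⊢
      intro h hh
      have hh' : g⁻¹ * h * g ∈ P := by
        have := hPnorm.conj_mem h hh g⁻¹
        simpa using this
      have key := congrArg (fun z => g * z * g⁻¹) (hc _ hh')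
      simpa [mul_assoc] using key
    haveI := hVnorm
    haveI := hcentnorm
    have hCnorm : (V ⊓ Subgroup.centralizer (P : Set X)).Normal :=
      Subgroup.normal_inf_normal V _
    rcases hVirr _ inf_le_left hCnorm with h | h
    · exfalso
      have : v0 ∈ (⊥ : Subgroup X) := h ▸ (Subgroup.mem_inf.mpr ⟨hv0V, hv0c⟩)
      exact hv01 (Subgroup.mem_bot.mp this)
    · exact inf_eq_left.mp h
  have hVW : V ≤ W := by
    intro v hv
    exact ⟨hVP hv, hVexp v hv, fun g hg =>
      (Subgroup.mem_centralizer_iff.mp (hVcent hv) g hg).symm⟩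
  -- Step 2: find x
  haveI := hUnorm; haveI := hWnorm
  have hUWnorm : (U ⊓ W).Normal := Subgroup.normal_inf_normal U W
  obtain ⟨u0, hu0U, hu0W⟩ : ∃ u ∈ U, ¬ memOmega1ZP p P u := by
    push_neg at hUnotOmega
    exact hUnotOmega
  obtain ⟨x, hxU, hxUW, hxfix⟩ := quotfp hp U (U ⊓ W) T inf_le_left hUnorm hUWnorm hUp
    ⟨u0, hu0U, fun h => hu0W (mem_omega1ZP.mp (Subgroup.mem_inf.mp h).2)⟩ hTq
    (by
      intro t ht u hu
      rw [Subgroup.mem_inf]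
      constructor
      · exact mul_mem (hUnorm.conj_mem u hu t) (inv_mem hu)
      · have h1 : ⁅u, t⁆ ∈ V := hUT (Subgroup.commutator_mem_commutator hu ht)
        have h2 : ⁅t, u⁆ ∈ W := by
          rw [← commutatorElement_inv]
          exact W.inv_mem (hVW h1)
        rw [show t * u * t⁻¹ * u⁻¹ = ⁅t, u⁆ from rfl]
        exact h2)
  have hxW : x ∉ W := fun h => hxUW (Subgroup.mem_inf.mpr ⟨hxU, h⟩)
  have hxP : x ∈ P := hUP hxU
  have hcomm : ∀ g : X, x⁻¹ * g⁻¹ * x * g ∈ U ⊓ W := by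
    intro g
    have h0 := hxfix g⁻¹
    rw [inv_inv] at h0
    have h1 := hUWnorm.conj_mem _ h0 x⁻¹
    have heq : x⁻¹ * (g⁻¹ * x * g * x⁻¹) * x⁻¹⁻¹ = x⁻¹ * g⁻¹ * x * g := by group
    rwa [heq] at h1
  have hcW : ∀ g : X, g⁻¹ * x⁻¹ * g * x ∈ U ⊓ W := by
    intro g
    have h0 := (U ⊓ W).inv_mem (hcomm g)
    have heq : (x⁻¹ * g⁻¹ * x * g)⁻¹ = g⁻¹ * x⁻¹ * g * x := by group
    rwa [heq] at h0
  have hWc : ∀ w ∈ W, ∀ h ∈ P, w * h = h * w := fun w hw h hh => hw.2.2 h hh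
  -- homomorphism property
  have hHom : ∀ g ∈ P, ∀ h ∈ P,
      (g * h)⁻¹ * x⁻¹ * (g * h) * x = (g⁻¹ * x⁻¹ * g * x) * (h⁻¹ * x⁻¹ * h * x) := by
    intro g hg h hh
    have hcg : g⁻¹ * x⁻¹ * g * x ∈ W := (Subgroup.mem_inf.mp (hcW g)).2
    have hcomm' : (g⁻¹ * x⁻¹ * g * x) * h = h * (g⁻¹ * x⁻¹ * g * x) := hWc _ hcg h hh
    have e1 : (g * h)⁻¹ * x⁻¹ * (g * h) * x
        = h⁻¹ * ((g⁻¹ * x⁻¹ * g * x) * h) * (h⁻¹ * x⁻¹ * h * x) := by group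
    rw [hcomm'] at e1
    rw [e1]
    group
  -- kernel property
  have hKer : ∀ g : X, (g⁻¹ * x⁻¹ * g * x = 1 ↔ g * x = x * g) := by
    intro g
    constructor
    · intro h
      have key : x * g * (g⁻¹ * x⁻¹ * g * x) = g * x := by group
      rw [h, mul_one] at key
      exact key.symm
    · intro h
      have e : g⁻¹ * x⁻¹ * g * x = (x * g)⁻¹ * (g * x) := by group
      rw [e, h]
      group
  -- equivariance
  have hEquiv : ∀ l : X, ∀ g ∈ P,
      (l⁻¹ * g * l)⁻¹ * x⁻¹ * (l⁻¹ * g * l) * x = l⁻¹ * (g⁻¹ * x⁻¹ * g * x) * l := by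
    intro l g hg
    have hdUW := hcomm l⁻¹
    rw [inv_inv] at hdUW
    set d : X := x⁻¹ * l * x * l⁻¹ with hd
    have hdW : d ∈ W := (Subgroup.mem_inf.mp hdUW).2
    have hdg : d * g = g * d := hWc d hdW g hg
    have hcgP : g⁻¹ * x⁻¹ * g * x ∈ P :=
      mul_mem (mul_mem (mul_mem (inv_mem hg) (inv_mem hxP)) hg) hxP
    have hdc : d * (g⁻¹ * x⁻¹ * g * x) = (g⁻¹ * x⁻¹ * g * x) * d := hWc d hdW _ hcgP
    have e1 : (l⁻¹ * g * l)⁻¹ * x⁻¹ * (l⁻¹ * g * l) * x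
        = l⁻¹ * (g⁻¹ * (x * d)⁻¹ * g * (x * d)) * l := by
      rw [hd]; group
    have e2 : g⁻¹ * (x * d)⁻¹ * g * (x * d)
        = (g⁻¹ * d⁻¹ * g) * ((g⁻¹ * x⁻¹ * g * x) * d) := by group
    have e3 : g⁻¹ * d⁻¹ * g = d⁻¹ := by
      have hinv : d⁻¹ * g = g * d⁻¹ := by
        have h' := congrArg (fun z => d⁻¹ * z * d⁻¹) hdg
        simpa [mul_assoc] using h'.symm
      rw [mul_assoc, hinv]
      simp
    have e4 : d⁻¹ * ((g⁻¹ * x⁻¹ * g * x) * d) = g⁻¹ * x⁻¹ * g * x := by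
      rw [← hdc]
      simp
    rw [e1, e2, e3, e4]
  -- the subgroup I = [P, x]
  let I : Subgroup X :=
    { carrier := {w : X | ∃ g ∈ P, w = g⁻¹ * x⁻¹ * g * x}
      one_mem' := ⟨1, P.one_mem, by group⟩
      mul_mem' := by
        rintro a b ⟨g, hg, rfl⟩ ⟨h, hh, rfl⟩
        exact ⟨g * h, mul_mem hg hh, (hHom g hg h hh).symm⟩
      inv_mem' := by
        rintro a ⟨g, hg, rfl⟩
        refine ⟨g⁻¹, inv_mem hg, ?_⟩
        have h0 := hHom g hg g⁻¹ (inv_mem hg)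
        have h1 : (g * g⁻¹)⁻¹ * x⁻¹ * (g * g⁻¹) * x = 1 := by group
        rw [h1] at h0
        exact inv_eq_of_mul_eq_one_right h0.symm }
  have hIU : I ≤ U := by
    rintro w ⟨g, hg, rfl⟩
    exact (Subgroup.mem_inf.mp (hcW g)).1
  have hInorm : I.Normal := by
    constructor
    rintro n ⟨g, hg, rfl⟩ l
    refine ⟨l * g * l⁻¹, hPnorm.conj_mem g hg l, ?_⟩
    have h0 := hEquiv l⁻¹ g hg
    rw [inv_inv] at h0
    exact h0.symm
  -- I is nontrivial
  have hIne : I ≠ ⊥ := by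
    intro hIbot
    apply hxW
    have hxc : ∀ g ∈ P, x * g = g * x := by
      intro g hg
      have hmem : g⁻¹ * x⁻¹ * g * x ∈ I := ⟨g, hg, rfl⟩
      rw [hIbot, Subgroup.mem_bot] at hmem
      exact ((hKer g).mp hmem).symm
    have hxp : x ^ p = 1 := by
      have hcent : x ^ p ∈ Subgroup.center X := by
        rw [Subgroup.mem_center_iff]
        intro g
        have hkW : x⁻¹ * g⁻¹ * x * g ∈ W := (Subgroup.mem_inf.mp (hcomm g)).2
        set k : X := x⁻¹ * g⁻¹ * x * g with hk
        have hxk : Commute x k := (hWc k hkW x hxP).symm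
        have h1 : g⁻¹ * x * g = x * k := by rw [hk]; group
        have h2 : g⁻¹ * x ^ p * g = (g⁻¹ * x * g) ^ p := by
          rw [show g⁻¹ * x * g = (MulAut.conj g⁻¹) x by simp [MulAut.conj], ← map_pow]
          simp [MulAut.conj]
        rw [h1, hxk.mul_pow, hkW.2.1, mul_one] at h2
        -- h2 : g⁻¹ * x^p * g = x^p
        have h3 : x ^ p * g = g * x ^ p := by
          simpa [mul_assoc] using congrArg (fun z => g * z) h2
        exact h3.symm
      rw [hZbot, Subgroup.mem_bot] at hcent
      exact hcent
    exact ⟨hxP, hxp, fun g hg => hxc g hg⟩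
  -- T does not centralize I
  have hIT : ∃ i ∈ I, ∃ t ∈ T, i * t ≠ t * i := by
    by_contra hcon
    push_neg at hcon
    obtain ⟨z, _, hz1, hzc⟩ := centerfp hp I T hInorm (hUp.to_le hIU) hIne hTq
      (fun t ht i hi => (hcon i hi t ht).symm)
    have : z ∈ Subgroup.center X := Subgroup.mem_center_iff.mpr (fun g => hzc g)
    rw [hZbot, Subgroup.mem_bot] at this
    exact hz1 this
  -- V ≤ I
  haveI := hInorm
  have hVI : V ≤ I := by
    obtain ⟨i, hiI, t, htT, hit⟩ := hIT
    have hJle : ⁅I, T⁆ ≤ V := le_trans (Subgroup.commutator_mono hIU le_rfl) hUT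
    have hJI : ⁅I, T⁆ ≤ I := Subgroup.commutator_le_left I T
    have hJnorm : (⁅I, T⁆ : Subgroup X).Normal := Subgroup.commutator_normal I T
    rcases hVirr _ hJle hJnorm with h | h
    · exfalso
      have hmem : ⁅i, t⁆ ∈ ⁅I, T⁆ := Subgroup.commutator_mem_commutator hiI htT
      rw [h, Subgroup.mem_bot, commutatorElement_eq_one_iff_mul_comm] at hmem
      exact hit hmem
    · exact h ▸ hJI
  -- assemble
  refine ⟨x, hxU, fun h => hxW h, ?_, ⟨I, rfl⟩, hHom, fun g _ => hKer g, hEquiv, ?_⟩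
  · intro g
    obtain ⟨h1, h2⟩ := Subgroup.mem_inf.mp (hcomm g)
    exact ⟨h1, h2⟩
  · intro v hv
    exact hVI hv
end

section
/- Let p be a prime, V a finite p-group, and X a finite group acting faithfully on V such that every normal p-subgroup of X is trivial (O_p(X) = 1). Let A ≤ X be an elementary abelian p-subgroup of order at least p² with the property that C_V(A) = C_V(a) for every nonidentity a ∈ A. If L is a nontrivial subgroup of X with L = [L,A], then A acts faithfully on L, i.e. no nonidentity element of A centralizes L. -/
open Subgroup MulAction

section Aux

variable {p : ℕ} {V : Type*} [Group V]

/-- The fixed points of an automorphism, as a subgroup. -/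
def fixSub (f : MulAut V) : Subgroup V where
  carrier := {v | f v = v}
  one_mem' := map_one f
  mul_mem' := fun {a b} ha hb => by
    simp only [Set.mem_setOf_eq] at *
    rw [map_mul, ha, hb]
  inv_mem' := fun {a} ha => by
    simp only [Set.mem_setOf_eq] at *
    rw [map_inv, ha]

lemma mem_fixSub_iff (f : MulAut V) (v : V) : v ∈ fixSub f ↔ f v = v := Iff.rfl

lemma mulAut_center_mem (f : MulAut V) {z : V} (hz : z ∈ Subgroup.center V) :
    f z ∈ Subgroup.center V := by
  rw [Subgroup.mem_center_iff] at *
  intro w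
  have : f (f.symm w) * f z = f z * f (f.symm w) := by
    rw [← map_mul, ← map_mul, hz]
  simpa using this

lemma stab_aux (g : MulAut V) (v d : V) (hd : g v = v * d) (hgd : g d = d) (k : ℕ) :
    (g ^ k) v = v * d ^ k := by
  induction k with
  | zero => simp
  | succ n ih =>
    have hdn : g (d ^ n) = d ^ n := by rw [map_pow, hgd]
    rw [pow_succ', MulAut.mul_apply, ih, map_mul, hd, hdn, mul_assoc, ← pow_succ']

lemma stab (hp : p.Prime) [Finite V] (hV : IsPGroup p V) {m : ℕ} (hm : ¬ p ∣ m)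
    (g : MulAut V) (hgm : g ^ m = 1) (v : V) (hgd : g (v⁻¹ * g v) = v⁻¹ * g v) :
    g v = v := by
  have hd : g v = v * (v⁻¹ * g v) := by rw [mul_inv_cancel_left]
  have h1 : v * (v⁻¹ * g v) ^ m = v := by
    rw [← stab_aux g v _ hd hgd m, hgm, MulAut.one_apply]
  have hdm : (v⁻¹ * g v) ^ m = 1 := by
    have h2 : v * (v⁻¹ * g v) ^ m = v * 1 := by rw [h1, mul_one]
    exact mul_left_cancel h2
  obtain ⟨k, hk⟩ := hV (v⁻¹ * g v)
  have h2 : orderOf (v⁻¹ * g v) ∣ p ^ k := orderOf_dvd_of_pow_eq_one hk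
  have h3 : orderOf (v⁻¹ * g v) ∣ m := orderOf_dvd_of_pow_eq_one hdm
  have hgcd : Nat.gcd (p ^ k) m = 1 :=
    ((Nat.Prime.coprime_iff_not_dvd hp).mpr hm).pow_left _
  have h4 : orderOf (v⁻¹ * g v) ∣ 1 := hgcd ▸ Nat.dvd_gcd h2 h3
  have h5 : v⁻¹ * g v = 1 := orderOf_eq_one_iff.mp (Nat.dvd_one.mp h4)
  have := congrArg (v * ·) h5
  simpa [mul_inv_cancel_left] using this

/-- Core computation: if `z⁻¹ * f z` lies in a central, `f`-fixed (hence `g`-fixed)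
subgroup, then `g z = z`. -/
lemma core (hp : p.Prime) [Finite V] (hV : IsPGroup p V) {m : ℕ} (hm : ¬ p ∣ m)
    (f g : MulAut V) (hfg : ∀ v, f (g v) = g (f v)) (hgm : g ^ m = 1)
    (hfix : ∀ v, f v = v → g v = v) (U : Subgroup V) (hUc : U ≤ Subgroup.center V)
    (hUf : ∀ w ∈ U, f w = w) (z : V) (hφU : z⁻¹ * f z ∈ U) : g z = z := by
  set φ := z⁻¹ * f z with hφ
  have hfz : f z = z * φ := by rw [hφ, mul_inv_cancel_left]
  have hφc : ∀ x : V, φ * x = x * φ := fun x =>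
    ((Subgroup.mem_center_iff.mp (hUc hφU)) x).symm
  have hfφ : f φ = φ := hUf φ hφU
  have hgφ : g φ = φ := hfix φ hfφ
  have hfgz : f (g z) = g z * φ := by
    rw [hfg z, hfz, map_mul, hgφ]
  have hfd : f (z⁻¹ * g z) = z⁻¹ * g z := by
    have h1 : f (z⁻¹ * g z) = (z * φ)⁻¹ * (g z * φ) := by
      rw [map_mul, map_inv, hfz, hfgz]
    rw [h1, mul_inv_rev]
    calc φ⁻¹ * z⁻¹ * (g z * φ) = φ⁻¹ * ((z⁻¹ * g z) * φ) := by group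
    _ = φ⁻¹ * (φ * (z⁻¹ * g z)) := by rw [← hφc]
    _ = z⁻¹ * g z := by rw [inv_mul_cancel_left]
  have hgd : g (z⁻¹ * g z) = z⁻¹ * g z := hfix _ hfd
  exact stab hp hV hm g hgm z hgd

lemma bar_pow (U : Subgroup V) [U.Normal] (h : MulAut V) (hbar : MulAut (V ⧸ U))
    (hc : ∀ x : V, hbar ((x : V ⧸ U)) = ((h x : V) : V ⧸ U)) (k : ℕ) :
    ∀ x : V, (hbar ^ k) (x : V ⧸ U) = (((h ^ k) x : V) : V ⧸ U) := by
  induction k with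
  | zero => intro x; simp
  | succ n ihn =>
    intro x
    rw [pow_succ, MulAut.mul_apply, hc x, pow_succ, MulAut.mul_apply]
    exact ihn (h x)

end Aux

section PQLemma

universe u

variable {p : ℕ}

/-- Cyclic version of Thompson's `P × Q` lemma. -/
lemma PQ (hp : p.Prime) {m : ℕ} (hm : ¬ p ∣ m) :
    ∀ (N : ℕ) (V : Type u) [Group V] [Finite V], Nat.card V ≤ N → IsPGroup p V →
      ∀ (f g : MulAut V), (∀ v, f (g v) = g (f v)) → f ^ p = 1 → g ^ m = 1 →
      (∀ v, f v = v → g v = v) → ∀ v, g v = v := by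
  intro N
  induction N with
  | zero =>
    intro V _ _ hcard
    have : 0 < Nat.card V := Nat.card_pos
    omega
  | succ N ih =>
    intro V _ _ hcard hV f g hfg hfp hgm hfix v
    rcases subsingleton_or_nontrivial V with hs | hnt
    · exact Subsingleton.elim _ _
    haveI : Fact p.Prime := ⟨hp⟩
    -- the cyclic group generated by f is a p-group
    have hof : orderOf f ∣ p ^ 1 := by simpa using orderOf_dvd_of_pow_eq_one hfp
    obtain ⟨j, _, hjeq⟩ := (Nat.dvd_prime_pow hp).mp hof
    have hQp : IsPGroup p (Subgroup.zpowers f) :=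
      IsPGroup.of_card (by rw [Nat.card_zpowers, hjeq])
    -- action of zpowers f on the center
    letI : MulAction (Subgroup.zpowers f) ↥(Subgroup.center V) :=
      { smul := fun q z => ⟨(q : MulAut V) z.1, mulAut_center_mem _ z.2⟩
        one_smul := fun z => Subtype.ext
          (show ((1 : Subgroup.zpowers f) : MulAut V) z.1 = z.1 by
            rw [OneMemClass.coe_one, MulAut.one_apply])
        mul_smul := fun q r z => Subtype.ext
          (show ((↑(q * r) : MulAut V)) z.1 = (q : MulAut V) ((r : MulAut V) z.1) by
            rw [Subgroup.coe_mul, MulAut.mul_apply]) }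
    have hsmul_def : ∀ (q : Subgroup.zpowers f) (z : ↥(Subgroup.center V)),
        (q • z : ↥(Subgroup.center V)).1 = (q : MulAut V) z.1 := fun _ _ => rfl
    -- the center has order divisible by p
    have hcdvd : p ∣ Nat.card ↥(Subgroup.center V) := by
      haveI := IsPGroup.center_nontrivial hV
      obtain ⟨n, hn⟩ := IsPGroup.iff_card.mp (hV.to_subgroup (Subgroup.center V))
      have h1 : 1 < Nat.card ↥(Subgroup.center V) :=
        Finite.one_lt_card_iff_nontrivial.mpr inferInstance
      rcases Nat.eq_zero_or_pos n with h0 | hpos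
      · rw [h0, pow_zero] at hn; omega
      · rw [hn]; exact dvd_pow_self p hpos.ne'
    -- find a nontrivial f-fixed central element
    have h1fix : (1 : ↥(Subgroup.center V)) ∈
        MulAction.fixedPoints (Subgroup.zpowers f) ↥(Subgroup.center V) := by
      intro q
      exact Subtype.ext (by rw [hsmul_def]; exact map_one _)
    obtain ⟨b, hbfix, hbne⟩ :=
      hQp.exists_fixed_point_of_prime_dvd_card_of_fixed_point (↥(Subgroup.center V)) hcdvd h1fix
    have hu_center : (b : V) ∈ Subgroup.center V := b.2
    have hu_ne : (b : V) ≠ 1 := by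
      intro h
      exact hbne (Subtype.ext h.symm)
    have hu_fix : f (b : V) = (b : V) := by
      have := hbfix ⟨f, Subgroup.mem_zpowers f⟩
      have h2 := congrArg Subtype.val this
      rw [hsmul_def] at h2
      exact h2
    -- the subgroup U
    set U : Subgroup V := Subgroup.center V ⊓ fixSub f with hU
    have hUc : U ≤ Subgroup.center V := inf_le_left
    have hUf : ∀ w ∈ U, f w = w := fun w hw => hw.2
    have hUg : ∀ w ∈ U, g w = w := fun w hw => hfix w hw.2
    haveI hUnormal : U.Normal := by
      constructor
      intro x hx t
      have hc : t * x * t⁻¹ = x := by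
        rw [Subgroup.mem_center_iff.mp (hUc hx) t]
        group
      rw [hc]; exact hx
    have hbU : (b : V) ∈ U := ⟨hu_center, hu_fix⟩
    -- maps of U are U
    have hmapf : U.map (f : V ≃* V).toMonoidHom = U := by
      apply le_antisymm
      · rintro _ ⟨w, hw, rfl⟩
        simpa [hUf w hw] using hw
      · intro w hw
        exact ⟨w, hw, hUf w hw⟩
    have hmapg : U.map (g : V ≃* V).toMonoidHom = U := by
      apply le_antisymm
      · rintro _ ⟨w, hw, rfl⟩
        simpa [hUg w hw] using hw
      · intro w hw
        exact ⟨w, hw, hUg w hw⟩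
    set fbar : MulAut (V ⧸ U) := QuotientGroup.congr U U f hmapf with hfbar
    set gbar : MulAut (V ⧸ U) := QuotientGroup.congr U U g hmapg with hgbar
    have hfbar_mk : ∀ x : V, fbar ((x : V ⧸ U)) = ((f x : V) : V ⧸ U) := fun x => rfl
    have hgbar_mk : ∀ x : V, gbar ((x : V ⧸ U)) = ((g x : V) : V ⧸ U) := fun x => rfl
    -- hypotheses for the quotient
    have hcard' : Nat.card (V ⧸ U) ≤ N := by
      have hcards : Nat.card V = Nat.card (V ⧸ U) * Nat.card U :=
        Subgroup.card_eq_card_quotient_mul_card_subgroup U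
      have hU2 : 1 < Nat.card U := by
        rw [Finite.one_lt_card_iff_nontrivial]
        exact ⟨⟨⟨(b : V), hbU⟩, 1, by
          intro h
          exact hu_ne (congrArg Subtype.val h)⟩⟩
      have hq : 0 < Nat.card (V ⧸ U) := Nat.card_pos
      have : Nat.card (V ⧸ U) < Nat.card V := by
        rw [hcards]
        exact (Nat.lt_mul_iff_one_lt_right hq).mpr hU2
      omega
    have hVq : IsPGroup p (V ⧸ U) := hV.to_quotient U
    have hfgbar : ∀ x : V ⧸ U, fbar (gbar x) = gbar (fbar x) := by
      intro x
      induction x using QuotientGroup.induction_on with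
      | H z => rw [hgbar_mk, hfbar_mk, hfg, hfbar_mk, hgbar_mk]
    have hfbarp : fbar ^ p = 1 := by
      ext x
      induction x using QuotientGroup.induction_on with
      | H z =>
        rw [bar_pow U f fbar hfbar_mk p z, hfp]
        rfl
    have hgbarm : gbar ^ m = 1 := by
      ext x
      induction x using QuotientGroup.induction_on with
      | H z =>
        rw [bar_pow U g gbar hgbar_mk m z, hgm]
        rfl
    have hfixbar : ∀ x : V ⧸ U, fbar x = x → gbar x = x := by
      intro x
      induction x using QuotientGroup.induction_on with
      | H z =>
        intro hfx
        rw [hfbar_mk] at hfx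
        have hφU : z⁻¹ * f z ∈ U := by
          have := (QuotientGroup.eq (s := U)).mp hfx.symm
          exact this
        have := core hp hV hm f g hfg hgm hfix U hUc hUf z hφU
        rw [hgbar_mk, this]
    -- apply the induction hypothesis
    have hres := ih (V ⧸ U) hcard' hVq fbar gbar hfgbar hfbarp hgbarm hfixbar
    -- conclude for v
    have hdv : v⁻¹ * g v ∈ U := by
      have := hres ((v : V ⧸ U))
      rw [hgbar_mk] at this
      exact (QuotientGroup.eq (s := U)).mp this.symm
    have hfd : f (v⁻¹ * g v) = v⁻¹ * g v := hUf _ hdv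
    have hgd : g (v⁻¹ * g v) = v⁻¹ * g v := hfix _ hfd
    exact stab hp hV hm g hgm v hgd

end PQLemma

/-- Let `V` be a finite `p`-group and `X` a finite group acting faithfully on
`V` (by automorphisms) with `O_p(X) = 1`.  Let `A ≤ X` be elementary abelian of order at
least `p²` with `C_V(A) = C_V(a)` for all nonidentity `a ∈ A`.  If `L` is a nontrivial
subgroup of `X` with `L = [L,A]`, then `A` acts faithfully on `L`: no nonidentity element of
`A` centralizes `L`. -/
theorem stmt6 {p : ℕ} (hp : p.Prime) {V X : Type*} [Group V] [Finite V] [Group X] [Finite X]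
    [MulDistribMulAction X V]
    (hfaithful : ∀ x : X, (∀ v : V, x • v = v) → x = 1)
    (hVp : IsPGroup p V)
    (hOp : ∀ N : Subgroup X, N.Normal → IsPGroup p N → N = ⊥)
    (A : Subgroup X)
    (hAexp : ∀ a ∈ A, a ^ p = 1) (hAab : ∀ a ∈ A, ∀ b ∈ A, a * b = b * a)
    (hAcard : p ^ 2 ≤ Nat.card A)
    (hAfix : ∀ a ∈ A, a ≠ 1 →
      {v : V | a • v = v} = {v : V | ∀ b ∈ A, b • v = v})
    (L : Subgroup X) (hLnt : L ≠ ⊥) (hLA : L = ⁅L, A⁆) :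
    ∀ a ∈ A, (∀ l ∈ L, a * l = l * a) → a = 1 := by
  intro a haA hcommL
  by_contra hane
  have hZ : {v : V | a • v = v} = {v : V | ∀ b ∈ A, b • v = v} := hAfix a haA hane
  set H : Subgroup X := L ⊔ A with hH
  -- every element of H commutes with a
  have hHcent : H ≤ Subgroup.centralizer {a} := by
    apply sup_le
    · intro l hl
      rw [Subgroup.mem_centralizer_iff]
      intro g hg
      rw [Set.mem_singleton_iff] at hg
      rw [hg]
      exact hcommL l hl
    · intro b hb
      rw [Subgroup.mem_centralizer_iff]
      intro g hg
      rw [Set.mem_singleton_iff] at hg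
      rw [hg]
      exact hAab a haA b hb
  have hHcomm : ∀ h ∈ H, a * h = h * a := fun h hh =>
    Subgroup.mem_centralizer_iff.mp (hHcent hh) a rfl
  -- every element of H fixes the fixed points of a
  set K : Subgroup X :=
    { carrier := {x | ∀ v : V, a • v = v → x • v = v}
      one_mem' := fun v _ => one_smul X v
      mul_mem' := fun {x y} hx hy v hv => by
        rw [mul_smul, hy v hv]; exact hx v hv
      inv_mem' := fun {x} hx v hv => by
        have h1 := hx v hv
        calc x⁻¹ • v = x⁻¹ • (x • v) := by rw [h1]
        _ = v := inv_smul_smul x v } with hK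
  have hAK : A ≤ K := by
    intro b hb v hv
    exact (Set.ext_iff.mp hZ v).mp hv b hb
  have hLK : L ≤ K := by
    have hcomm : ⁅L, A⁆ ≤ K := by
      rw [Subgroup.commutator_le]
      intro l hl b hb v hv
      have hvA : ∀ c ∈ A, c • v = v := (Set.ext_iff.mp hZ v).mp hv
      have hbv : b • v = v := hvA b hb
      have hbinv : b⁻¹ • v = v := inv_smul_eq_iff.mpr hbv.symm
      have hc : Commute a l := hcommL l hl
      have hlv : a • (l⁻¹ • v) = l⁻¹ • v := by
        calc a • (l⁻¹ • v) = (a * l⁻¹) • v := (mul_smul _ _ _).symm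
        _ = (l⁻¹ * a) • v := by rw [hc.inv_right.eq]
        _ = l⁻¹ • (a • v) := mul_smul _ _ _
        _ = l⁻¹ • v := by rw [hv]
      have hblv : b • (l⁻¹ • v) = l⁻¹ • v := (Set.ext_iff.mp hZ (l⁻¹ • v)).mp hlv b hb
      open scoped commutatorElement in show ⁅l, b⁆ • v = v
      rw [commutatorElement_def, mul_smul, mul_smul, mul_smul, hbinv, hblv, smul_inv_smul]
    exact le_of_eq_of_le hLA hcomm
  have hHK : H ≤ K := sup_le hLK hAK
  have hHfix : ∀ h ∈ H, ∀ v : V, a • v = v → h • v = v := fun h hh => hHK hh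
  -- H is a p-group
  set τ : X →* MulAut V := MulDistribMulAction.toMulAut X V with hτ
  have hτ_apply : ∀ (x : X) (v : V), (τ x) v = x • v := fun _ _ => rfl
  have hHp : IsPGroup p ↥H := by
    rintro ⟨h, hh⟩
    set n := orderOf h with hn
    have hn0 : n ≠ 0 := (orderOf_pos h).ne'
    set k := n.factorization p with hk
    refine ⟨k, ?_⟩
    have key : h ^ p ^ k = 1 := by
      set y := h ^ p ^ k with hy
      have hyH : y ∈ H := pow_mem hh _
      have hcah : Commute a h := hHcomm h hh
      have hcay : Commute a y := hcah.pow_right _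
      have hym : y ^ (n / p ^ k) = 1 := by
        rw [hy, ← pow_mul, Nat.ordProj_mul_ordCompl_eq_self n p]
        exact pow_orderOf_eq_one h
      have hpm : ¬ p ∣ n / p ^ k := Nat.not_dvd_ordCompl hp hn0
      have hcomm' : ∀ v : V, (τ a) ((τ y) v) = (τ y) ((τ a) v) := by
        intro v
        rw [hτ_apply, hτ_apply, hτ_apply, hτ_apply, smul_smul, smul_smul, hcay.eq]
      have hfp : (τ a) ^ p = 1 := by rw [← map_pow, hAexp a haA, map_one]
      have hgm : (τ y) ^ (n / p ^ k) = 1 := by rw [← map_pow, hym, map_one]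
      have hfix' : ∀ v : V, (τ a) v = v → (τ y) v = v := by
        intro v hv
        rw [hτ_apply] at hv ⊢
        exact hHfix y hyH v hv
      have hyv := PQ hp hpm (Nat.card V) V le_rfl hVp (τ a) (τ y) hcomm' hfp hgm hfix'
      have : y = 1 := hfaithful y (fun v => by rw [← hτ_apply]; exact hyv v)
      exact this
    apply Subtype.ext
    simpa using key
  -- H is nilpotent, so L = [L,A] forces L = ⊥
  haveI : Fact p.Prime := ⟨hp⟩
  haveI hnil : Group.IsNilpotent ↥H := hHp.isNilpotent
  set L' := L.subgroupOf H with hL'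
  set A' := A.subgroupOf H with hA'
  have hLH : L ≤ H := le_sup_left
  have hAH : A ≤ H := le_sup_right
  have hmapL : Subgroup.map H.subtype L' = L := by
    rw [hL', Subgroup.subgroupOf_map_subtype, inf_eq_left.mpr hLH]
  have hmapA : Subgroup.map H.subtype A' = A := by
    rw [hA', Subgroup.subgroupOf_map_subtype, inf_eq_left.mpr hAH]
  have hkey : L' = ⁅L', A'⁆ := by
    apply Subgroup.map_injective H.subtype_injective
    rw [Subgroup.map_commutator, hmapL, hmapA, ← hLA]
  have hbot : L' = ⊥ := by
    obtain ⟨n, hn⟩ := Subgroup.nilpotent_iff_lowerCentralSeries.mp hnil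
    have hle : ∀ j, L' ≤ (⊤ : Subgroup ↥H).lowerCentralSeries j := by
      intro j
      induction j with
      | zero => exact le_top
      | succ i ihi =>
        calc L' = ⁅L', A'⁆ := hkey
        _ ≤ ⁅(⊤ : Subgroup ↥H).lowerCentralSeries i, ⊤⁆ := Subgroup.commutator_mono ihi le_top
        _ = (⊤ : Subgroup ↥H).lowerCentralSeries (i + 1) := (Subgroup.lowerCentralSeries_succ ⊤ i).symm
    exact le_bot_iff.mp (hn ▸ hle n)
  apply hLnt
  rw [← hmapL, hbot, Subgroup.map_bot]
end

section
/- Let p be a prime, L a finite group, S a Sylow p-subgroup of L, and P = O_p(L) the largest normal p-subgroup of L. Let W be a subgroup of S which is normalized by S, let m ∈ L, and set K = ⟨W, W^m⟩. Assume O^p(L)P ≤ KP. Then O^p(L) ≤ K and [O^p(L), P] ≤ [W,P][W^m,P] ≤ (W ∩ P)(W^m ∩ P) = ⟨(W ∩ P)^L⟩, the normal closure of W ∩ P in L. -/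
open Pointwise

/-- `conjClosure A H = ⟨A^H⟩`, the subgroup generated by all `H`-conjugates of `A`. -/
def conjClosure {G : Type*} [Group G] (A H : Subgroup G) : Subgroup G :=
  Subgroup.closure {x : G | ∃ h ∈ H, ∃ a ∈ A, x = h * a * h⁻¹}

open Subgroup
open scoped commutatorElement

private lemma le_normalizer_of' {G : Type*} [Group G] {H U : Subgroup G}
    (h : ∀ u ∈ U, ∀ x ∈ H, u * x * u⁻¹ ∈ H) : U ≤ Subgroup.normalizer (H : Set G) := by
  intro u hu
  rw [Subgroup.mem_normalizer_iff]
  intro x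
  constructor
  · exact h u hu x
  · intro hx
    have h2 := h u⁻¹ (inv_mem hu) _ hx
    rwa [show u⁻¹ * (u * x * u⁻¹) * u⁻¹⁻¹ = x by group] at h2

private lemma conj_commutator_le' {G : Type*} [Group G] {U V H : Subgroup G} (g : G)
    (h : ∀ u ∈ U, ∀ v ∈ V, g * ⁅u, v⁆ * g⁻¹ ∈ H) :
    ∀ x ∈ ⁅U, V⁆, g * x * g⁻¹ ∈ H := by
  intro x hx
  rw [Subgroup.commutator_def] at hx
  induction hx using Subgroup.closure_induction with
  | mem x hx =>
    obtain ⟨u, hu, v, hv, rfl⟩ := hx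
    exact h u hu v hv
  | one => simpa using one_mem H
  | mul x y _ _ hx hy =>
    rw [show g * (x * y) * g⁻¹ = (g * x * g⁻¹) * (g * y * g⁻¹) by group]
    exact mul_mem hx hy
  | inv x _ hx =>
    rw [show g * x⁻¹ * g⁻¹ = (g * x * g⁻¹)⁻¹ by group]
    exact inv_mem hx

private lemma conj_sup_le' {G : Type*} [Group G] {A B H : Subgroup G} (g : G)
    (hA : ∀ x ∈ A, g * x * g⁻¹ ∈ H) (hB : ∀ x ∈ B, g * x * g⁻¹ ∈ H) :
    ∀ x ∈ A ⊔ B, g * x * g⁻¹ ∈ H := by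
  intro x hx
  rw [Subgroup.sup_eq_closure] at hx
  induction hx using Subgroup.closure_induction with
  | mem x hx =>
    rcases hx with h | h
    · exact hA x h
    · exact hB x h
  | one => simpa using one_mem H
  | mul x y _ _ hx hy =>
    rw [show g * (x * y) * g⁻¹ = (g * x * g⁻¹) * (g * y * g⁻¹) by group]
    exact mul_mem hx hy
  | inv x _ hx =>
    rw [show g * x⁻¹ * g⁻¹ = (g * x * g⁻¹)⁻¹ by group]
    exact inv_mem hx

private lemma coe_sup_of_le_normalizer' {G : Type*} [Group G] {A B : Subgroup G}
    (h : B ≤ Subgroup.normalizer (A : Set G)) :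
    ((A ⊔ B : Subgroup G) : Set G) = (A : Set G) * (B : Set G) := by
  apply Set.eq_of_subset_of_subset
  · intro x hx
    rw [SetLike.mem_coe, Subgroup.sup_eq_closure] at hx
    induction hx using Subgroup.closure_induction with
    | mem x hx =>
      rcases hx with hA | hB
      · exact ⟨x, hA, 1, one_mem B, mul_one x⟩
      · exact ⟨1, one_mem A, x, hB, one_mul x⟩
    | one => exact ⟨1, one_mem A, 1, one_mem B, one_mul 1⟩
    | mul x y _ _ hx hy =>
      obtain ⟨a1, ha1, b1, hb1, rfl⟩ := hx
      obtain ⟨a2, ha2, b2, hb2, rfl⟩ := hy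
      refine ⟨a1 * (b1 * a2 * b1⁻¹), ?_, b1 * b2, mul_mem hb1 hb2, by group⟩
      exact mul_mem ha1 ((Subgroup.mem_normalizer_iff.mp (h hb1) a2).mp ha2)
    | inv x _ hx =>
      obtain ⟨a, ha, b, hb, rfl⟩ := hx
      refine ⟨b⁻¹ * a⁻¹ * b⁻¹⁻¹, ?_, b⁻¹, inv_mem hb, by group⟩
      exact (Subgroup.mem_normalizer_iff.mp (h (inv_mem hb)) a⁻¹).mp (inv_mem ha)
  · rintro x ⟨a, ha, b, hb, rfl⟩
    exact mul_mem (le_sup_left (α := Subgroup G) (a := A) (b := B) ha)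
      (le_sup_right (α := Subgroup G) (a := A) (b := B) hb)

private lemma mem_of_pow_mem' {G : Type*} [Group G] [Finite G] {H : Subgroup G} {x : G} {k : ℕ}
    (hco : Nat.Coprime k (orderOf x)) (hx : x ^ k ∈ H) : x ∈ H := by
  rcases Nat.lt_or_ge (orderOf x) 2 with h2 | h2
  · have hpos := orderOf_pos x
    have h1 : orderOf x = 1 := by omega
    rw [orderOf_eq_one_iff.mp h1]
    exact one_mem H
  · obtain ⟨c, -, hc⟩ := Nat.exists_mul_mod_eq_one_of_coprime hco h2
    have hx2 : x = (x ^ k) ^ c := by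
      rw [← pow_mul, ← pow_mod_orderOf, hc, pow_one]
    rw [hx2]
    exact pow_mem hx c


/-- Let `L` be a finite group, `S` a Sylow `p`-subgroup, `P = O_p(L)`, `W ≤ S`
a subgroup normalized by `S`, `m ∈ L`, and `K = ⟨W, W^m⟩` where `W^m = m⁻¹Wm`.  If
`O^p(L)P ≤ KP` (with `T = O^p(L)`), then `O^p(L) ≤ K` and
`[O^p(L),P] ≤ [W,P][W^m,P] ≤ (W ∩ P)(W^m ∩ P) = ⟨(W ∩ P)^L⟩`. -/
theorem stmt10 {p : ℕ} (hp : p.Prime) {L : Type*} [Group L] [Finite L]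
    (S : Sylow p L)
    (P : Subgroup L) (hPnorm : P.Normal) (hPp : IsPGroup p P)
    (hPmax : ∀ N : Subgroup L, N.Normal → IsPGroup p N → N ≤ P)
    (W : Subgroup L) (hWS : W ≤ S)
    (hWnorm : ∀ s ∈ (S : Subgroup L), ∀ w ∈ W, s * w * s⁻¹ ∈ W)
    (m : L)
    (Wm : Subgroup L) (hWm : Wm = Subgroup.map (MulAut.conj m⁻¹).toMonoidHom W)
    (T : Subgroup L) (hTnorm : T.Normal)
    (hTq : ∀ x : L, ∃ n : ℕ, x ^ p ^ n ∈ T)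
    (hTmin : ∀ N : Subgroup L, N.Normal → (∀ x : L, ∃ n : ℕ, x ^ p ^ n ∈ N) → T ≤ N)
    (hTPK : T ⊔ P ≤ (W ⊔ Wm) ⊔ P) :
    T ≤ W ⊔ Wm ∧
    ((⁅T, P⁆ : Subgroup L) : Set L) ⊆ ((⁅W, P⁆ : Subgroup L) : Set L) * ((⁅Wm, P⁆ : Subgroup L) : Set L) ∧
    (((⁅W, P⁆ : Subgroup L) : Set L) * ((⁅Wm, P⁆ : Subgroup L) : Set L)) ⊆
      ((W ⊓ P : Subgroup L) : Set L) * ((Wm ⊓ P : Subgroup L) : Set L) ∧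
    ((W ⊓ P : Subgroup L) : Set L) * ((Wm ⊓ P : Subgroup L) : Set L) =
      ((conjClosure (W ⊓ P) ⊤ : Subgroup L) : Set L) := by
  haveI hfact : Fact p.Prime := ⟨hp⟩
  haveI := hPnorm
  haveI := hTnorm
  -- P ≤ S
  have hPS : P ≤ (S : Subgroup L) := by
    have hsup : IsPGroup p ((S : Subgroup L) ⊔ P : Subgroup L) :=
      IsPGroup.to_sup_of_normal_right S.isPGroup' hPp
    have := S.is_maximal' hsup le_sup_left
    rw [← this]
    exact le_sup_right
  -- membership description of Wm
  have hWmMem : ∀ u : L, u ∈ Wm ↔ ∃ w ∈ W, m⁻¹ * w * m = u := by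
    intro u
    rw [hWm, Subgroup.mem_map]
    constructor
    · rintro ⟨w, hw, rfl⟩
      refine ⟨w, hw, ?_⟩
      simp only [MulEquiv.coe_toMonoidHom, MulAut.conj_apply]
      group
    · rintro ⟨w, hw, rfl⟩
      refine ⟨w, hw, ?_⟩
      simp only [MulEquiv.coe_toMonoidHom, MulAut.conj_apply]
      group
  -- P normalizes Wm
  have hPnormWm : ∀ q ∈ P, ∀ u ∈ Wm, q * u * q⁻¹ ∈ Wm := by
    intro q hq u hu
    obtain ⟨w, hw, rfl⟩ := (hWmMem u).mp hu
    have hmq : m * q * m⁻¹ ∈ P := hPnorm.conj_mem q hq m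
    have h2 : (m * q * m⁻¹) * w * (m * q * m⁻¹)⁻¹ ∈ W := hWnorm _ (hPS hmq) w hw
    exact (hWmMem _).mpr ⟨_, h2, by group⟩
  -- commutator bounds
  have hWP : ⁅W, P⁆ ≤ W ⊓ P := by
    rw [Subgroup.commutator_le]
    intro w hw q hq
    refine Subgroup.mem_inf.mpr ⟨?_, ?_⟩
    · rw [show ⁅w, q⁆ = w * (q * w⁻¹ * q⁻¹) by rw [commutatorElement_def]; group]
      exact mul_mem hw (hWnorm q (hPS hq) w⁻¹ (inv_mem hw))
    · rw [show ⁅w, q⁆ = (w * q * w⁻¹) * q⁻¹ by rw [commutatorElement_def]]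
      exact mul_mem (hPnorm.conj_mem q hq w) (inv_mem hq)
  have hWmP : ⁅Wm, P⁆ ≤ Wm ⊓ P := by
    rw [Subgroup.commutator_le]
    intro u hu q hq
    refine Subgroup.mem_inf.mpr ⟨?_, ?_⟩
    · rw [show ⁅u, q⁆ = u * (q * u⁻¹ * q⁻¹) by rw [commutatorElement_def]; group]
      exact mul_mem hu (hPnormWm q hq u⁻¹ (inv_mem hu))
    · rw [show ⁅u, q⁆ = (u * q * u⁻¹) * q⁻¹ by rw [commutatorElement_def]]
      exact mul_mem (hPnorm.conj_mem q hq u) (inv_mem hq)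
  set K := W ⊔ Wm with hK
  set A := (⁅W, P⁆ : Subgroup L) with hA
  set B := (⁅Wm, P⁆ : Subgroup L) with hB
  set D := A ⊔ B with hD
  have hAW : A ≤ W := hWP.trans inf_le_left
  have hAP : A ≤ P := hWP.trans inf_le_right
  have hBWm : B ≤ Wm := hWmP.trans inf_le_left
  have hBP : B ≤ P := hWmP.trans inf_le_right
  have hDK : D ≤ K := sup_le (hAW.trans le_sup_left) (hBWm.trans le_sup_right)
  have hDP : D ≤ P := sup_le hAP hBP
  -- W normalizes D
  have hWnormD : W ≤ Subgroup.normalizer (D : Set L) := by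
    apply le_normalizer_of'
    intro w hw
    apply conj_sup_le' w
    · apply conj_commutator_le' w
      intro u hu v hv
      rw [show w * ⁅u, v⁆ * w⁻¹ = ⁅w * u * w⁻¹, w * v * w⁻¹⁆ by
        rw [commutatorElement_def, commutatorElement_def]; group]
      exact Subgroup.mem_sup_left (S := A) (T := B)
        (commutator_mem_commutator (hWnorm w (hWS hw) u hu) (hPnorm.conj_mem v hv w))
    · apply conj_commutator_le' w
      intro u hu v hv
      have hc : ⁅u, v⁆ ∈ B := commutator_mem_commutator hu hv
      rw [show w * ⁅u, v⁆ * w⁻¹ = ⁅u, v⁆ * ⁅⁅u, v⁆⁻¹, w⁆ by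
        rw [commutatorElement_def]; group]
      refine mul_mem (Subgroup.mem_sup_right (S := A) (T := B) hc) ?_
      have : ⁅⁅u, v⁆⁻¹, w⁆ ∈ ⁅P, W⁆ :=
        commutator_mem_commutator (inv_mem (hBP hc)) hw
      rw [Subgroup.commutator_comm] at this
      exact Subgroup.mem_sup_left (S := A) (T := B) this
  -- Wm normalizes D
  have hWmnormD : Wm ≤ Subgroup.normalizer (D : Set L) := by
    apply le_normalizer_of'
    intro w hw
    apply conj_sup_le' w
    · apply conj_commutator_le' w
      intro u hu v hv
      have hc : ⁅u, v⁆ ∈ A := commutator_mem_commutator hu hv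
      rw [show w * ⁅u, v⁆ * w⁻¹ = ⁅u, v⁆ * ⁅⁅u, v⁆⁻¹, w⁆ by
        rw [commutatorElement_def]; group]
      refine mul_mem (Subgroup.mem_sup_left (S := A) (T := B) hc) ?_
      have : ⁅⁅u, v⁆⁻¹, w⁆ ∈ ⁅P, Wm⁆ :=
        commutator_mem_commutator (inv_mem (hAP hc)) hw
      rw [Subgroup.commutator_comm] at this
      exact Subgroup.mem_sup_right (S := A) (T := B) this
    · apply conj_commutator_le' w
      intro u hu v hv
      rw [show w * ⁅u, v⁆ * w⁻¹ = ⁅w * u * w⁻¹, w * v * w⁻¹⁆ by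
        rw [commutatorElement_def, commutatorElement_def]; group]
      refine Subgroup.mem_sup_right (S := A) (T := B)
        (commutator_mem_commutator (mul_mem (mul_mem hw hu) (inv_mem hw))
          (hPnorm.conj_mem v hv w))
  -- P normalizes A, B, D
  have hPnormA : P ≤ Subgroup.normalizer (A : Set L) := by
    apply le_normalizer_of'
    intro q hq
    apply conj_commutator_le' q
    intro u hu v hv
    rw [show q * ⁅u, v⁆ * q⁻¹ = ⁅q * u * q⁻¹, q * v * q⁻¹⁆ by
      rw [commutatorElement_def, commutatorElement_def]; group]
    exact commutator_mem_commutator (hWnorm q (hPS hq) u hu) (hPnorm.conj_mem v hv q)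
  have hPnormB : P ≤ Subgroup.normalizer (B : Set L) := by
    apply le_normalizer_of'
    intro q hq
    apply conj_commutator_le' q
    intro u hu v hv
    rw [show q * ⁅u, v⁆ * q⁻¹ = ⁅q * u * q⁻¹, q * v * q⁻¹⁆ by
      rw [commutatorElement_def, commutatorElement_def]; group]
    exact commutator_mem_commutator (hPnormWm q hq u hu) (hPnorm.conj_mem v hv q)
  have hPnormD : P ≤ Subgroup.normalizer (D : Set L) := by
    apply le_normalizer_of'
    intro q hq
    apply conj_sup_le' q
    · intro x hx
      exact Subgroup.mem_sup_left (S := A) (T := B)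
        ((Subgroup.mem_normalizer_iff.mp (hPnormA hq) x).mp hx)
    · intro x hx
      exact Subgroup.mem_sup_right (S := A) (T := B)
        ((Subgroup.mem_normalizer_iff.mp (hPnormB hq) x).mp hx)
  have hKnormD : K ≤ Subgroup.normalizer (D : Set L) := sup_le hWnormD hWmnormD
  -- [K, P] ≤ D
  have hKP_D : ⁅K, P⁆ ≤ D := by
    rw [Subgroup.commutator_le]
    intro k hk q hq
    rw [hK, Subgroup.sup_eq_closure] at hk
    induction hk using Subgroup.closure_induction with
    | mem x hx =>
      rcases hx with h | h
      · exact Subgroup.mem_sup_left (S := A) (T := B)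
          (commutator_mem_commutator h hq)
      · exact Subgroup.mem_sup_right (S := A) (T := B)
          (commutator_mem_commutator h hq)
    | one => simpa [commutatorElement_def] using one_mem D
    | mul x y hx hy hx' hy' =>
      rw [show ⁅x * y, q⁆ = (x * ⁅y, q⁆ * x⁻¹) * ⁅x, q⁆ by
        rw [commutatorElement_def, commutatorElement_def, commutatorElement_def]; group]
      have hxK : x ∈ K := by rw [hK, Subgroup.sup_eq_closure]; exact hx
      exact mul_mem ((Subgroup.mem_normalizer_iff.mp (hKnormD hxK) _).mp hy') hx'
    | inv x hx hx' =>
      rw [show ⁅x⁻¹, q⁆ = x⁻¹ * ⁅x, q⁆⁻¹ * x⁻¹⁻¹ by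
        rw [commutatorElement_def, commutatorElement_def]; group]
      have hxK : x⁻¹ ∈ K := by
        rw [hK, Subgroup.sup_eq_closure]; exact inv_mem hx
      exact (Subgroup.mem_normalizer_iff.mp (hKnormD hxK) _).mp (inv_mem hx')
  -- P normalizes K
  have hPnormK : P ≤ Subgroup.normalizer (K : Set L) := by
    apply le_normalizer_of'
    intro q hq k hk
    rw [show q * k * q⁻¹ = k * ⁅k⁻¹, q⁆ by rw [commutatorElement_def]; group]
    exact mul_mem hk (hDK (hKP_D (commutator_mem_commutator (inv_mem hk) hq)))
  -- every p'-element of L lies in K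
  have hE : ∀ x : L, ¬ (p ∣ orderOf x) → x ∈ K := by
    intro x hx
    have hcop : Nat.Coprime p (orderOf x) := (hp.coprime_iff_not_dvd).mpr hx
    have hxT : x ∈ T := by
      obtain ⟨n, hn⟩ := hTq x
      exact mem_of_pow_mem' (hcop.pow_left n) hn
    have hxKP : x ∈ K ⊔ P := hTPK (Subgroup.mem_sup_left (S := T) (T := P) hxT)
    rw [← SetLike.mem_coe, Subgroup.mul_normal K P] at hxKP
    obtain ⟨k, hkK, y, hyP, hky⟩ := hxKP
    obtain ⟨n, hn⟩ := hPp ⟨y, hyP⟩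
    have hyn : y ^ p ^ n = 1 := by
      have := congrArg (Subtype.val) hn
      simpa using this
    have hpow : ∀ j : ℕ, ∃ k' ∈ K, x ^ j = k' * y ^ j := by
      intro j
      induction j with
      | zero => exact ⟨1, one_mem K, by simp⟩
      | succ j ih =>
        obtain ⟨k', hk', hkj⟩ := ih
        refine ⟨k * (y * k' * y⁻¹), mul_mem hkK
          ((Subgroup.mem_normalizer_iff.mp (hPnormK hyP) k').mp hk'), ?_⟩
        rw [pow_succ', hkj, ← hky, pow_succ' y j]
        group
    obtain ⟨k', hk', hkn⟩ := hpow (p ^ n)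
    have hxpn : x ^ p ^ n ∈ K := by rw [hkn, hyn, mul_one]; exact hk'
    exact mem_of_pow_mem' (hcop.pow_left n) hxpn
  -- T ≤ K
  have hTK : T ≤ K := by
    set E : Set L := {x : L | ¬ (p ∣ orderOf x)} with hEdef
    have hEconj : ∀ g x : L, x ∈ E → g * x * g⁻¹ ∈ E := by
      intro g x hx
      have : orderOf x = orderOf (g * x * g⁻¹) :=
        SemiconjBy.orderOf_eq g (show g * x = (g * x * g⁻¹) * g by group)
      simpa [hEdef, ← this] using hx
    have hNnormal : (Subgroup.closure E).Normal := by
      constructor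
      intro x hx g
      induction hx using Subgroup.closure_induction with
      | mem x hx => exact Subgroup.subset_closure (hEconj g x hx)
      | one => simpa using one_mem _
      | mul x y _ _ hx hy =>
        rw [show g * (x * y) * g⁻¹ = (g * x * g⁻¹) * (g * y * g⁻¹) by group]
        exact mul_mem hx hy
      | inv x _ hx =>
        rw [show g * x⁻¹ * g⁻¹ = (g * x * g⁻¹)⁻¹ by group]
        exact inv_mem hx
    have hTN : T ≤ Subgroup.closure E := by
      apply hTmin _ hNnormal
      intro x
      have hord : orderOf x ≠ 0 := (orderOf_pos x).ne'
      refine ⟨(orderOf x).factorization p, Subgroup.subset_closure ?_⟩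
      have hdvd : p ^ (orderOf x).factorization p ∣ orderOf x := Nat.ordProj_dvd _ p
      have hne : p ^ (orderOf x).factorization p ≠ 0 := pow_ne_zero _ hp.pos.ne'
      have : orderOf (x ^ p ^ (orderOf x).factorization p)
          = orderOf x / p ^ (orderOf x).factorization p :=
        orderOf_pow_of_dvd hne hdvd
      rw [hEdef, Set.mem_setOf_eq, this]
      exact Nat.not_dvd_ordCompl hp hord
    exact hTN.trans (Subgroup.closure_le K |>.mpr (fun x hx => hE x hx))
  refine ⟨hTK, ?_, ?_, ?_⟩
  · -- [T,P] ⊆ A * B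
    intro x hx
    have hxD : x ∈ D := hKP_D (Subgroup.commutator_mono hTK le_rfl hx)
    have hcoe : ((D : Subgroup L) : Set L) = (A : Set L) * (B : Set L) :=
      coe_sup_of_le_normalizer' (hBP.trans hPnormA)
    rw [← hcoe]
    exact hxD
  · exact Set.mul_subset_mul (fun x hx => hWP hx) (fun x hx => hWmP hx)
  · -- (W ⊓ P)(Wm ⊓ P) = conjClosure (W ⊓ P) ⊤
    set X := W ⊓ P with hX
    set Xm := Wm ⊓ P with hXm
    have hSnormX : (S : Subgroup L) ≤ Subgroup.normalizer (X : Set L) := by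
      apply le_normalizer_of'
      intro s hs x hx
      exact ⟨hWnorm s hs x hx.1, hPnorm.conj_mem x hx.2 s⟩
    have hcoe : ((X ⊔ Xm : Subgroup L) : Set L) = (X : Set L) * (Xm : Set L) :=
      coe_sup_of_le_normalizer' ((inf_le_right.trans hPS).trans hSnormX)
    -- T ⊔ S = ⊤
    have hTS : T ⊔ (S : Subgroup L) = ⊤ := by
      haveI : (S : Subgroup L).FiniteIndex := ⟨Subgroup.index_ne_zero_of_finite⟩
      have hQp : IsPGroup p (L ⧸ T) := by
        intro q
        induction q using QuotientGroup.induction_on with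
        | H x =>
          obtain ⟨n, hn⟩ := hTq x
          exact ⟨n, by rw [← QuotientGroup.mk_pow]; rwa [QuotientGroup.eq_one_iff]⟩
      obtain ⟨nn, hnn⟩ := IsPGroup.iff_card.mp hQp
      have hTidx : T.index = p ^ nn := hnn
      have h1 : (T ⊔ (S : Subgroup L)).index ∣ (S : Subgroup L).index :=
        Subgroup.index_dvd_of_le le_sup_right
      have h2 : (T ⊔ (S : Subgroup L)).index ∣ p ^ nn := by
        rw [← hTidx]; exact Subgroup.index_dvd_of_le le_sup_left
      have hpS : ¬ p ∣ (S : Subgroup L).index := S.not_dvd_index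
      have hnd : ¬ p ∣ (T ⊔ (S : Subgroup L)).index := fun h => hpS (h.trans h1)
      have hcop : Nat.Coprime ((T ⊔ (S : Subgroup L)).index) (p ^ nn) :=
        Nat.Coprime.pow_right nn (((hp.coprime_iff_not_dvd).mpr hnd).symm)
      rw [← Subgroup.index_eq_one]
      exact hcop.eq_one_of_dvd h2
    have hdecomp : ∀ g : L, ∃ t ∈ T, ∃ s ∈ (S : Subgroup L), g = t * s := by
      intro g
      have : g ∈ ((T ⊔ (S : Subgroup L) : Subgroup L) : Set L) := by
        rw [hTS]; trivial
      rw [Subgroup.normal_mul] at this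
      obtain ⟨t, ht, s, hs, hts⟩ := this
      exact ⟨t, ht, s, hs, hts.symm⟩
    have hXR : X ≤ X ⊔ Xm := le_sup_left
    have hgen : ∀ h a : L, a ∈ X → h * a * h⁻¹ ∈ X ⊔ Xm := by
      intro h a ha
      obtain ⟨t, ht, s, hs, rfl⟩ := hdecomp h
      have ha' : s * a * s⁻¹ ∈ X := (Subgroup.mem_normalizer_iff.mp (hSnormX hs) a).mp ha
      rw [show t * s * a * (t * s)⁻¹ = t * (s * a * s⁻¹) * t⁻¹ by group]
      rw [show t * (s * a * s⁻¹) * t⁻¹ = (s * a * s⁻¹) * ⁅(s * a * s⁻¹)⁻¹, t⁆ by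
        rw [commutatorElement_def]; group]
      refine mul_mem (hXR ha') ?_
      have hcomm : ⁅(s * a * s⁻¹)⁻¹, t⁆ ∈ ⁅P, T⁆ :=
        commutator_mem_commutator (inv_mem ha'.2) ht
      rw [Subgroup.commutator_comm] at hcomm
      have : ⁅T, P⁆ ≤ X ⊔ Xm := by
        refine (Subgroup.commutator_mono hTK le_rfl).trans (hKP_D.trans ?_)
        exact sup_le (hWP.trans le_sup_left) (hWmP.trans le_sup_right)
      exact this hcomm
    have hCC : conjClosure X ⊤ = X ⊔ Xm := by
      apply le_antisymm
      · rw [conjClosure]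
        apply Subgroup.closure_le _ |>.mpr
        rintro x ⟨h, -, a, ha, rfl⟩
        exact hgen h a ha
      · apply sup_le
        · intro a ha
          exact Subgroup.subset_closure ⟨1, trivial, a, ha, by group⟩
        · intro u hu
          obtain ⟨w, hw, rfl⟩ := (hWmMem u).mp hu.1
          have hwP : w ∈ P := by
            have := hPnorm.conj_mem _ hu.2 m
            rwa [show m * (m⁻¹ * w * m) * m⁻¹ = w by group] at this
          exact Subgroup.subset_closure ⟨m⁻¹, trivial, w, ⟨hw, hwP⟩, by group⟩
    rw [hCC, hcoe]
end

section
/- Let V = {f : {1,…,5} → GF(2) : Σᵢ f(i) = 0} be the sum-zero submodule of the GF(2)-permutation module of the symmetric group Sym(5) on 5 points (the non-trivial irreducible part of the 5-point permutation module, which is the natural O₄⁻(2)-module for Sym(5)). Let F₁ = ⟨(1 2)(3 4), (1 3)(2 4)⟩, a fours subgroup contained in Alt(5), and F₂ = ⟨(1 2), (3 4)⟩, a fours subgroup not contained in Alt(5). Then F₂ acts quadratically on V, i.e. [V,F₂,F₂] = 0, while F₁ does not act quadratically on V, i.e. [V,F₁,F₁] ≠ 0. -/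
open Equiv

/-- The sum-zero submodule of the `GF(2)`-permutation module of `Sym(5)` on 5 points. -/
def sumZeroFive : AddSubgroup (Fin 5 → ZMod 2) where
  carrier := {f | ∑ i, f i = 0}
  zero_mem' := by simp
  add_mem' := by
    intro a b ha hb
    simp only [Set.mem_setOf_eq] at *
    simp [Finset.sum_add_distrib, ha, hb]
  neg_mem' := by
    intro a ha
    simp only [Set.mem_setOf_eq] at *
    simp [Finset.sum_neg_distrib, ha]

/-- `[V, A]` for a set `A` of permutations acting on `Fin 5 → ZMod 2` by
`σ • f = f ∘ σ⁻¹`: the subgroup generated by all `f - σ • f` with `f ∈ V`, `σ ∈ A`. -/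
def permComm (V : AddSubgroup (Fin 5 → ZMod 2)) (A : Subgroup (Perm (Fin 5))) :
    AddSubgroup (Fin 5 → ZMod 2) :=
  AddSubgroup.closure {g | ∃ f ∈ V, ∃ σ ∈ A, g = f - f ∘ ⇑σ⁻¹}

/-- The fours group `F₁ = ⟨(1 2)(3 4), (1 3)(2 4)⟩ ≤ Alt(5)`. -/
def foursF₁ : Subgroup (Perm (Fin 5)) :=
  Subgroup.closure {swap 0 1 * swap 2 3, swap 0 2 * swap 1 3}

/-- The fours group `F₂ = ⟨(1 2), (3 4)⟩ ≰ Alt(5)`. -/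
def foursF₂ : Subgroup (Perm (Fin 5)) :=
  Subgroup.closure {swap 0 1, swap 2 3}

/-- Functions constant on `{0,1}` and on `{2,3}`. -/
def Usub : AddSubgroup (Fin 5 → ZMod 2) where
  carrier := {f | f 0 = f 1 ∧ f 2 = f 3}
  zero_mem' := ⟨rfl, rfl⟩
  add_mem' := by
    rintro a b ⟨ha1, ha2⟩ ⟨hb1, hb2⟩
    exact ⟨by simp [ha1, hb1], by simp [ha2, hb2]⟩
  neg_mem' := by
    rintro a ⟨h1, h2⟩
    exact ⟨by simp [h1], by simp [h2]⟩

lemma mem_Usub {g : Fin 5 → ZMod 2} : g ∈ Usub ↔ g 0 = g 1 ∧ g 2 = g 3 := Iff.rfl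

/-- The explicit four-element subgroup containing `F₂`. -/
def K2 : Subgroup (Perm (Fin 5)) where
  carrier := {1, swap 0 1, swap 2 3, swap 0 1 * swap 2 3}
  one_mem' := Or.inl rfl
  mul_mem' := by
    rintro a b (rfl | rfl | rfl | rfl) (rfl | rfl | rfl | rfl) <;> decide
  inv_mem' := by
    rintro a (rfl | rfl | rfl | rfl) <;> decide

lemma F2_le_K2 : foursF₂ ≤ K2 := by
  rw [foursF₂, Subgroup.closure_le]
  rintro x (rfl | rfl)
  · exact Or.inr (Or.inl rfl)
  · exact Or.inr (Or.inr (Or.inl rfl))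

lemma s01 (i : Fin 5) : (swap 0 1 : Perm (Fin 5)) i = ![1, 0, 2, 3, 4] i := by
  revert i; decide

lemma s23 (i : Fin 5) : (swap 2 3 : Perm (Fin 5)) i = ![0, 1, 3, 2, 4] i := by
  revert i; decide

lemma sub_comm_zmod2 (a b : ZMod 2) : a - b = b - a := by revert a b; decide

lemma commF2_le_Usub : permComm sumZeroFive foursF₂ ≤ Usub := by
  rw [permComm, AddSubgroup.closure_le]
  rintro g ⟨f, -, σ, hσ, rfl⟩
  rcases F2_le_K2 hσ with rfl | rfl | rfl | rfl <;>
    refine mem_Usub.mpr ⟨?_, ?_⟩ <;>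
    simp [Function.comp, s01, s23, sub_comm_zmod2]

/-- On the non-trivial irreducible part `V` of the 5-point `GF(2)`-permutation
module of `Sym(5)` (the natural `O₄⁻(2)`-module), the fours group `F₂ = ⟨(1 2),(3 4)⟩` acts
quadratically, `[V,F₂,F₂] = 0`, while the fours group `F₁ = ⟨(1 2)(3 4),(1 3)(2 4)⟩ ≤ Alt(5)`
does not, `[V,F₁,F₁] ≠ 0`. -/
theorem stmt14 :
    permComm (permComm sumZeroFive foursF₂) foursF₂ = ⊥ ∧
    permComm (permComm sumZeroFive foursF₁) foursF₁ ≠ ⊥ := by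
  constructor
  · rw [eq_bot_iff, permComm, AddSubgroup.closure_le]
    rintro g ⟨f, hf, σ, hσ, rfl⟩
    obtain ⟨h01, h23⟩ := mem_Usub.mp (commF2_le_Usub hf)
    have : f - f ∘ ⇑σ⁻¹ = 0 := by
      rcases F2_le_K2 hσ with rfl | rfl | rfl | rfl <;>
        · funext i
          fin_cases i <;> simp_all [Function.comp, s01, s23]
    simpa [AddSubgroup.mem_bot] using this
  · intro h
    have hmem : (![1, 1, 1, 1, 0] : Fin 5 → ZMod 2) ∈
        permComm (permComm sumZeroFive foursF₁) foursF₁ := by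
      apply AddSubgroup.subset_closure
      refine ⟨![1, 1, 0, 0, 0], ?_, swap 0 2 * swap 1 3,
        Subgroup.subset_closure (Or.inr rfl), by decide⟩
      apply AddSubgroup.subset_closure
      exact ⟨![1, 0, 0, 0, 1],
        show ∑ i, (![1, 0, 0, 0, 1] : Fin 5 → ZMod 2) i = 0 by decide, swap 0 1 * swap 2 3,
        Subgroup.subset_closure (Or.inl rfl), by decide⟩
    rw [h, AddSubgroup.mem_bot] at hmem
    exact absurd hmem (by decide)
end
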